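/- Let u ∈ k^* and let α ∈ Aff_3(k) \ B have type (γ1,γ2,γ3). If (γ1,γ2,γ3) = (3,2,1), then the lift α̂ of α satisfies condition (C). -/

import Mathlib

open MvPolynomial

noncomputable section

namespace YasudaPaper

variable {k : Type*} [Field k]

/-- `f := x1*x3 - x2^2` (variables: `X 0 = x1, X 1 = x2, X 2 = x3`). -/
def fP : MvPolynomial (Fin 3) k := X 0 * X 2 - X 1 ^ 2

/-- `r := x2*f + x1^2`. -/
def rP : MvPolynomial (Fin 3) k := X 1 * fP + X 0 ^ 2

/-- `g := x3*f^2 + 2*x1*x2*f + x1^3`. -/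
def gP : MvPolynomial (Fin 3) k := X 2 * fP ^ 2 + 2 * X 0 * X 1 * fP + X 0 ^ 3

/-- The Jacobian derivation `Δ = Δ_{(f,g)}`, `h ↦ det ∂(f,g,h)/∂(x1,x2,x3)`. -/
def Del (h : MvPolynomial (Fin 3) k) : MvPolynomial (Fin 3) k :=
  Matrix.det !![pderiv 0 fP, pderiv 1 fP, pderiv 2 fP;
                pderiv 0 gP, pderiv 1 gP, pderiv 2 gP;
                pderiv 0 h,  pderiv 1 h,  pderiv 2 h]

/-- `φ = exp D`: for every `h` and every `N` with `D^[N] h = 0`,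
    `φ h = ∑_{i<N} D^i(h)/i!`.  (For a locally nilpotent `D` this characterizes
    the exponential automorphism.) -/
def IsExpOf {σ : Type*} (D : MvPolynomial σ k → MvPolynomial σ k)
    (φ : MvPolynomial σ k ≃ₐ[k] MvPolynomial σ k) : Prop :=
  ∀ (h : MvPolynomial σ k) (N : ℕ), D^[N] h = 0 →
    φ h = ∑ i ∈ Finset.range N, (Nat.factorial i : k)⁻¹ • D^[i] h

/-- `α` is an affine automorphism: `α(x_i) = ∑_j a_{j,i} x_j + b_i` with `A ∈ GL₃(k)`. -/
def IsAffine (α : MvPolynomial (Fin 3) k ≃ₐ[k] MvPolynomial (Fin 3) k) : Prop :=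
  ∃ (A : Matrix (Fin 3) (Fin 3) k) (b : Fin 3 → k), IsUnit A.det ∧
    ∀ i : Fin 3, α (X i) = (∑ j : Fin 3, C (A j i) * X j) + C (b i)

/-- `Aff_3(k)` as a set of automorphisms. -/
def AffSet : Set (MvPolynomial (Fin 3) k ≃ₐ[k] MvPolynomial (Fin 3) k) := {α | IsAffine α}

/-- `α` is a triangular automorphism: `α(x_i) = a_i x_i + f_i(x_1,…,x_{i-1})`, `a_i ≠ 0`. -/
def IsTriangular (α : MvPolynomial (Fin 3) k ≃ₐ[k] MvPolynomial (Fin 3) k) : Prop :=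
  ∃ (a : Fin 3 → k) (p : Fin 3 → MvPolynomial (Fin 3) k),
    (∀ i, a i ≠ 0) ∧ (∀ i, p i ∈ MvPolynomial.supported k {j | j < i}) ∧
    (∀ i, α (X i) = C (a i) * X i + p i)

/-- `BA_3(k)` as a set of automorphisms. -/
def TriSet : Set (MvPolynomial (Fin 3) k ≃ₐ[k] MvPolynomial (Fin 3) k) := {α | IsTriangular α}

/-- The tame subgroup `TA_3(k) = ⟨Aff_3(k), BA_3(k)⟩`. -/
def TA : Subgroup (MvPolynomial (Fin 3) k ≃ₐ[k] MvPolynomial (Fin 3) k) :=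
  Subgroup.closure (AffSet ∪ TriSet)

/-- `β = β_u = (u^3 x1, u^2 x2, u x3)`. -/
def IsBeta (u : k) (β : MvPolynomial (Fin 3) k ≃ₐ[k] MvPolynomial (Fin 3) k) : Prop :=
  β (X 0) = C (u ^ 3) * X 0 ∧ β (X 1) = C (u ^ 2) * X 1 ∧ β (X 2) = C u * X 2

/-- `B = {β_u | u ∈ k^*}`. -/
def BSet : Set (MvPolynomial (Fin 3) k ≃ₐ[k] MvPolynomial (Fin 3) k) :=
  {β | ∃ u : k, u ≠ 0 ∧ IsBeta u β}

/-! Six-variable ring `k[x1,x2,x3,t_r,t_f,t_g]`: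
variables `X 0 = x1, X 1 = x2, X 2 = x3, X 3 = t_r, X 4 = t_f, X 5 = t_g`. -/

/-- The inclusion of variable index sets. -/
def ι36 : Fin 3 → Fin 6 := Fin.castLE (by norm_num)

/-- The embedding `k[x1,x2,x3] → k[x1,x2,x3,t_r,t_f,t_g]`. -/
def embP : MvPolynomial (Fin 3) k →ₐ[k] MvPolynomial (Fin 6) k := rename ι36

/-- The substitution map `π : t_r ↦ r, t_f ↦ f, t_g ↦ g` (fixing `x1,x2,x3`). -/
def piMap : MvPolynomial (Fin 6) k →ₐ[k] MvPolynomial (Fin 3) k :=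
  aeval ![X 0, X 1, X 2, rP, fP, gP]

/-- The triangular derivation
`Δ' = -2 t_r t_f ∂/∂x1 + (4 x1 t_r - t_g) ∂/∂x2 + (6 x2 t_r + 2 t_f²) ∂/∂x3 - t_f t_g ∂/∂t_r`. -/
def Del' (p : MvPolynomial (Fin 6) k) : MvPolynomial (Fin 6) k :=
  (-(2 * X 3 * X 4)) * pderiv 0 p + (4 * X 0 * X 3 - X 5) * pderiv 1 p +
  (6 * X 1 * X 3 + 2 * X 4 ^ 2) * pderiv 2 p + (-(X 4 * X 5)) * pderiv 3 p

/-- The weight `w1 = (1,2,3,1,0,1)`. -/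
def w1 : Fin 6 → ℕ := ![1, 2, 3, 1, 0, 1]

/-- The weight `w2 = (0,0,0,0,1,0)`. -/
def w2 : Fin 6 → ℕ := ![0, 0, 0, 0, 1, 0]

/-- The sixth cyclic lexicographic order on exponent vectors: first compare the
exponent of `t_g`, then lexicographically the exponents of `x1,x2,x3,t_r,t_f`. -/
def cyclicLt (a b : Fin 6 →₀ ℕ) : Prop :=
  a 5 < b 5 ∨ (a 5 = b 5 ∧ ∃ m : Fin 5,
    (∀ l : Fin 5, l < m → a l.castSucc = b l.castSucc) ∧ a m.castSucc < b m.castSucc)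

/-- The leading monomial of `p` (for the sixth cyclic lexicographic order) is `m`. -/
def LeadMonIs (p : MvPolynomial (Fin 6) k) (m : Fin 6 →₀ ℕ) : Prop :=
  m ∈ p.support ∧ ∀ m' ∈ p.support, m' ≠ m → cyclicLt m' m

/-- The exponent vector of the monomial `t_f^δ t_g^γ`. -/
def tfMon (γ δ : ℕ) : Fin 6 →₀ ℕ := Finsupp.single 4 δ + Finsupp.single 5 γ

/-- The set `P_{γ,δ}`. -/
def Pset (γ δ : ℕ) : Set (MvPolynomial (Fin 6) k) :=
  {p | p ≠ 0 ∧ weightedTotalDegree w1 p ≤ γ ∧ weightedTotalDegree w2 p ≤ δ ∧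
    LeadMonIs p (tfMon γ δ)}

/-- `α'` is a lift of `α`. -/
def IsLift (α : MvPolynomial (Fin 3) k ≃ₐ[k] MvPolynomial (Fin 3) k)
    (α' : MvPolynomial (Fin 6) k →ₐ[k] MvPolynomial (Fin 6) k) : Prop :=
  (∀ i : Fin 3, α' (X (ι36 i)) = embP (α (X i))) ∧
  (∀ p, piMap (α' p) = α (piMap p))

/-- `t = γ_j = max {i | a_{i,j} ≠ 0}` (with rows indexed `1,2,3`). -/
def TypeIs (A : Matrix (Fin 3) (Fin 3) k) (j : Fin 3) (t : ℕ) : Prop :=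
  ∃ i : Fin 3, t = (i : ℕ) + 1 ∧ A i j ≠ 0 ∧ ∀ i' : Fin 3, i < i' → A i' j = 0

/-- Condition (C) for a lift `α'` of an affine automorphism of type `(γ1,γ2,γ3)`,
relative to `φ' = exp(uΔ')`. -/
def CondC (γ1 γ2 γ3 : ℕ) (φ' : MvPolynomial (Fin 6) k ≃ₐ[k] MvPolynomial (Fin 6) k)
    (α' : MvPolynomial (Fin 6) k →ₐ[k] MvPolynomial (Fin 6) k) : Prop :=
  ∃ m4 m5 m6 n4 n5 n6 : ℕ,
    1 ≤ n4 ∧ 1 ≤ n5 ∧ 1 ≤ n6 ∧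
    φ' (α' (X 3)) ∈ Pset m4 n4 ∧
    φ' (α' (X 4)) ∈ Pset m5 n5 ∧
    φ' (α' (X 5)) ∈ Pset m6 n6 ∧
    γ1 ≤ m6 ∧ γ2 ≤ 2 * m6 ∧ γ3 ≤ 3 * m6 ∧ m4 ≤ m6 ∧
    γ1 + 1 ≤ n6 - 1 ∧ γ2 + 1 ≤ 2 * (n6 - 1) ∧ γ3 + 1 ≤ 3 * (n6 - 1) ∧ n4 ≤ n6 - 1

/-- The image of `x_j` under the affine map given by `(A, d)`, inside the six-variable ring. -/
def affImg (A : Matrix (Fin 3) (Fin 3) k) (d : Fin 3 → k) (j : Fin 3) :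
    MvPolynomial (Fin 6) k :=
  (∑ i : Fin 3, C (A i j) * X (ι36 i)) + C (d j)

/-- The image of `t_f` under the lift `α̂`:
`α̂(t_f) = α(f) + (a_{1,1}a_{3,3} - 2a_{1,2}a_{3,2} + a_{1,3}a_{3,1})(t_f - f)`. -/
def hatTf (A : Matrix (Fin 3) (Fin 3) k) (d : Fin 3 → k) : MvPolynomial (Fin 6) k :=
  (affImg A d 0 * affImg A d 2 - affImg A d 1 ^ 2) +
    C (A 0 0 * A 2 2 - 2 * (A 0 1 * A 2 1) + A 0 2 * A 2 0) *
      (X 4 - (X 0 * X 2 - X 1 ^ 2))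

/-- The lift `α̂` of the affine automorphism given by `(A, d)`:
`α̂(x_i) = α(x_i)`, `α̂(t_f)` as in `hatTf`, `α̂(t_r) = α̂(x2 t_f + x1²)`,
`α̂(t_g) = α̂(x3 t_f² + 2 x1 x2 t_f + x1³)`. -/
def hatLift (A : Matrix (Fin 3) (Fin 3) k) (d : Fin 3 → k) :
    MvPolynomial (Fin 6) k →ₐ[k] MvPolynomial (Fin 6) k :=
  aeval ![affImg A d 0, affImg A d 1, affImg A d 2,
    affImg A d 1 * hatTf A d + affImg A d 0 ^ 2,
    hatTf A d,
    affImg A d 2 * hatTf A d ^ 2 + 2 * affImg A d 0 * affImg A d 1 * hatTf A d +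
      affImg A d 0 ^ 3]


/-- weighted degree of an exponent vector -/
def Wdeg (ω : Fin 6 → ℕ) (m : Fin 6 →₀ ℕ) : ℕ := ∑ i, m i * ω i

lemma weight_eq_Wdeg (ω : Fin 6 → ℕ) (m : Fin 6 →₀ ℕ) :
    (Finsupp.weight ω) m = Wdeg ω m := by
  rw [Finsupp.weight_apply, Finsupp.sum_fintype]
  · simp [Wdeg, mul_comm]
  · intro i; simp

lemma Wdeg_add (ω : Fin 6 → ℕ) (a b : Fin 6 →₀ ℕ) :
    Wdeg ω (a + b) = Wdeg ω a + Wdeg ω b := by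
  simp [Wdeg, add_mul, Finset.sum_add_distrib]

lemma Wdeg_single (ω : Fin 6 → ℕ) (i : Fin 6) (e : ℕ) :
    Wdeg ω (Finsupp.single i e) = e * ω i := by
  rw [Wdeg, Finset.sum_eq_single i]
  · simp
  · intro b _ hb; rw [Finsupp.single_eq_of_ne' (Ne.symm hb), zero_mul]
  · simp

def Bd (ω : Fin 6 → ℕ) (p : MvPolynomial (Fin 6) k) (W : ℕ) : Prop :=
  ∀ m ∈ p.support, Wdeg ω m ≤ W

lemma Bd.wtd {ω : Fin 6 → ℕ} {p : MvPolynomial (Fin 6) k} {W : ℕ} (h : Bd ω p W) :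
    weightedTotalDegree ω p ≤ W :=
  Finset.sup_le fun m hm => by rw [weight_eq_Wdeg]; exact h m hm

lemma Bd.coeff_eq_zero {ω : Fin 6 → ℕ} {p : MvPolynomial (Fin 6) k} {W : ℕ}
    (h : Bd ω p W) {M : Fin 6 →₀ ℕ} (hM : W < Wdeg ω M) : coeff M p = 0 := by
  by_contra hc
  exact absurd (h M (mem_support_iff.mpr hc)) (by omega)

lemma Bd_C {ω : Fin 6 → ℕ} (c : k) (W : ℕ) : Bd ω (C c) W := by
  intro m hm
  rw [C_apply] at hm
  rcases Finset.mem_singleton.mp (support_monomial_subset hm) with rfl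
  simp [Wdeg]

lemma Bd_X {ω : Fin 6 → ℕ} {i : Fin 6} {W : ℕ} (h : ω i ≤ W) :
    Bd ω (X i : MvPolynomial (Fin 6) k) W := by
  intro m hm
  rw [support_X, Finset.mem_singleton] at hm
  subst hm; rwa [Wdeg_single, one_mul]

lemma Bd_add {ω : Fin 6 → ℕ} {p q : MvPolynomial (Fin 6) k} {W : ℕ}
    (hp : Bd ω p W) (hq : Bd ω q W) : Bd ω (p + q) W := by
  classical
  intro m hm
  rcases Finset.mem_union.mp (support_add hm) with h | h
  exacts [hp m h, hq m h]

lemma Bd_mul {ω : Fin 6 → ℕ} {p q : MvPolynomial (Fin 6) k} {W₁ W₂ W : ℕ}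
    (hp : Bd ω p W₁) (hq : Bd ω q W₂) (hW : W₁ + W₂ ≤ W) : Bd ω (p * q) W := by
  classical
  intro m hm
  rcases Finset.mem_add.mp (support_mul p q hm) with ⟨a, ha, b, hb, rfl⟩
  rw [Wdeg_add]
  exact le_trans (add_le_add (hp a ha) (hq b hb)) hW

lemma Bd_neg {ω : Fin 6 → ℕ} {p : MvPolynomial (Fin 6) k} {W : ℕ}
    (hp : Bd ω p W) : Bd ω (-p) W := by
  intro m hm; rw [support_neg] at hm; exact hp m hm

lemma Bd_sub {ω : Fin 6 → ℕ} {p q : MvPolynomial (Fin 6) k} {W : ℕ}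
    (hp : Bd ω p W) (hq : Bd ω q W) : Bd ω (p - q) W := by
  rw [sub_eq_add_neg]; exact Bd_add hp (Bd_neg hq)

lemma Bd_mono {ω : Fin 6 → ℕ} {p : MvPolynomial (Fin 6) k} {W W' : ℕ}
    (hp : Bd ω p W) (h : W ≤ W') : Bd ω p W' :=
  fun m hm => le_trans (hp m hm) h

lemma Bd_monomial {ω : Fin 6 → ℕ} {m₀ : Fin 6 →₀ ℕ} {c : k} {W : ℕ} (h : Wdeg ω m₀ ≤ W) :
    Bd ω (monomial m₀ c) W := by
  intro m hm
  rcases Finset.mem_singleton.mp (support_monomial_subset hm) with rfl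
  exact h

def TopBd (ω : Fin 6 → ℕ) (p : MvPolynomial (Fin 6) k) (W : ℕ) (m₀ : Fin 6 →₀ ℕ) : Prop :=
  ∀ m ∈ p.support, Wdeg ω m ≤ W ∧ (Wdeg ω m = W → m = m₀)

lemma TopBd.bd {ω : Fin 6 → ℕ} {p : MvPolynomial (Fin 6) k} {W : ℕ} {m₀ : Fin 6 →₀ ℕ}
    (h : TopBd ω p W m₀) : Bd ω p W := fun m hm => (h m hm).1

lemma TopBd_monomial {ω : Fin 6 → ℕ} {m₀ : Fin 6 →₀ ℕ} {c : k} {W : ℕ} (h : Wdeg ω m₀ = W) :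
    TopBd ω (monomial m₀ c) W m₀ := by
  intro m hm
  rcases Finset.mem_singleton.mp (support_monomial_subset hm) with rfl
  exact ⟨le_of_eq h, fun _ => rfl⟩

lemma TopBd_add_left {ω : Fin 6 → ℕ} {p q : MvPolynomial (Fin 6) k} {W W' : ℕ}
    {m₀ : Fin 6 →₀ ℕ} (hp : TopBd ω p W m₀) (hq : Bd ω q W') (h : W' < W) :
    TopBd ω (p + q) W m₀ := by
  classical
  intro m hm
  rcases Finset.mem_union.mp (support_add hm) with hmem | hmem
  · exact hp m hmem
  · exact ⟨le_trans (hq m hmem) h.le, fun he => absurd (hq m hmem) (by omega)⟩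

lemma TopBd_add_right {ω : Fin 6 → ℕ} {p q : MvPolynomial (Fin 6) k} {W W' : ℕ}
    {m₀ : Fin 6 →₀ ℕ} (hp : Bd ω p W') (hq : TopBd ω q W m₀) (h : W' < W) :
    TopBd ω (p + q) W m₀ := by
  rw [add_comm]; exact TopBd_add_left hq hp h

lemma TopBd_mul {ω : Fin 6 → ℕ} {p q : MvPolynomial (Fin 6) k} {W₁ W₂ : ℕ}
    {m₁ m₂ : Fin 6 →₀ ℕ} (hp : TopBd ω p W₁ m₁) (hq : TopBd ω q W₂ m₂) :
    TopBd ω (p * q) (W₁ + W₂) (m₁ + m₂) := by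
  classical
  intro m hm
  rcases Finset.mem_add.mp (support_mul p q hm) with ⟨a, ha, b, hb, rfl⟩
  rw [Wdeg_add]
  refine ⟨add_le_add (hp a ha).1 (hq b hb).1, fun he => ?_⟩
  have h1 := (hp a ha).1; have h2 := (hq b hb).1
  have e1 : Wdeg ω a = W₁ := by omega
  have e2 : Wdeg ω b = W₂ := by omega
  rw [(hp a ha).2 e1, (hq b hb).2 e2]

lemma TopBd_C_mul {ω : Fin 6 → ℕ} {p : MvPolynomial (Fin 6) k} {W : ℕ} {m₀ : Fin 6 →₀ ℕ}
    (c : k) (hp : TopBd ω p W m₀) : TopBd ω (C c * p) W m₀ := by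
  classical
  intro m hm
  rcases Finset.mem_add.mp (support_mul _ p hm) with ⟨a, ha, b, hb, rfl⟩
  rw [C_apply] at ha
  rcases Finset.mem_singleton.mp (support_monomial_subset ha) with rfl
  rw [zero_add]
  exact hp b hb

lemma coeff_mul_topBd {ω : Fin 6 → ℕ} {p q : MvPolynomial (Fin 6) k} {W₁ W₂ : ℕ}
    {m₁ m₂ : Fin 6 →₀ ℕ} (hp : TopBd ω p W₁ m₁) (hq : TopBd ω q W₂ m₂)
    (e1 : Wdeg ω m₁ = W₁) (e2 : Wdeg ω m₂ = W₂) :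
    coeff (m₁ + m₂) (p * q) = coeff m₁ p * coeff m₂ q := by
  classical
  rw [coeff_mul]
  apply Finset.sum_eq_single_of_mem (m₁, m₂) (Finset.HasAntidiagonal.mem_antidiagonal.mpr rfl)
  rintro ⟨a, b⟩ hab hne
  have hab' : a + b = m₁ + m₂ := Finset.HasAntidiagonal.mem_antidiagonal.mp hab
  by_cases hca : coeff a p = 0
  · rw [hca, zero_mul]
  by_cases hcb : coeff b q = 0
  · rw [hcb, mul_zero]
  have ha := hp a (mem_support_iff.mpr hca)
  have hb := hq b (mem_support_iff.mpr hcb)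
  have hsum : Wdeg ω a + Wdeg ω b = W₁ + W₂ := by
    rw [← Wdeg_add, hab', Wdeg_add, e1, e2]
  have ea : Wdeg ω a = W₁ := by have := ha.1; have := hb.1; omega
  have eb : Wdeg ω b = W₂ := by omega
  exact absurd (Prod.ext (ha.2 ea) (hb.2 eb)) hne

lemma tfMon_apply (γ δ : ℕ) (i : Fin 6) :
    tfMon γ δ i = if i = 4 then δ else if i = 5 then γ else 0 := by
  fin_cases i <;> simp [tfMon, Finsupp.single_apply]

lemma w1_vals : w1 0 = 1 ∧ w1 1 = 2 ∧ w1 2 = 3 ∧ w1 3 = 1 ∧ w1 4 = 0 ∧ w1 5 = 1 := by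
  refine ⟨rfl, rfl, rfl, rfl, rfl, rfl⟩

lemma w2_vals : w2 0 = 0 ∧ w2 1 = 0 ∧ w2 2 = 0 ∧ w2 3 = 0 ∧ w2 4 = 1 ∧ w2 5 = 0 := by
  refine ⟨rfl, rfl, rfl, rfl, rfl, rfl⟩

lemma Wdeg_w1 (m : Fin 6 →₀ ℕ) :
    Wdeg w1 m = m 0 + 2 * m 1 + 3 * m 2 + m 3 + m 5 := by
  obtain ⟨e0, e1, e2, e3, e4, e5⟩ := w1_vals
  rw [Wdeg, Fin.sum_univ_six, e0, e1, e2, e3, e4, e5]; ring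

lemma Wdeg_w2 (m : Fin 6 →₀ ℕ) : Wdeg w2 m = m 4 := by
  obtain ⟨e0, e1, e2, e3, e4, e5⟩ := w2_vals
  rw [Wdeg, Fin.sum_univ_six, e0, e1, e2, e3, e4, e5]; ring

lemma Wdeg_tfMon (ω : Fin 6 → ℕ) (γ δ : ℕ) :
    Wdeg ω (tfMon γ δ) = δ * ω 4 + γ * ω 5 := by
  rw [tfMon, Wdeg_add, Wdeg_single, Wdeg_single]

lemma mem_Pset {p : MvPolynomial (Fin 6) k} {γ δ : ℕ}
    (h1 : weightedTotalDegree w1 p ≤ γ) (h2 : weightedTotalDegree w2 p ≤ δ)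
    (hc : coeff (tfMon γ δ) p ≠ 0) : p ∈ Pset γ δ := by
  have hw1 : ∀ m ∈ p.support, m 0 + 2 * m 1 + 3 * m 2 + m 3 + m 5 ≤ γ := by
    intro m hm
    rw [← Wdeg_w1, ← weight_eq_Wdeg]
    exact le_trans (le_weightedTotalDegree w1 hm) h1
  have hw2 : ∀ m ∈ p.support, m 4 ≤ δ := by
    intro m hm
    rw [← Wdeg_w2, ← weight_eq_Wdeg]
    exact le_trans (le_weightedTotalDegree w2 hm) h2
  refine ⟨fun h0 => hc (by simp [h0]), h1, h2, mem_support_iff.mpr hc, ?_⟩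
  intro m hm hne
  have hb1 := hw1 m hm
  have hb2 := hw2 m hm
  by_cases h5 : m 5 < γ
  · left
    have t5 : tfMon γ δ 5 = γ := by simp [tfMon, Finsupp.single_apply]
    rw [t5]; exact h5
  · have h5' : m 5 = γ := by omega
    have h0 : m 0 = 0 := by omega
    have h1' : m 1 = 0 := by omega
    have h2' : m 2 = 0 := by omega
    have h3 : m 3 = 0 := by omega
    have h4 : m 4 < δ := by
      rcases lt_or_eq_of_le hb2 with h | h
      · exact h
      · exfalso
        apply hne
        ext i
        rw [tfMon_apply]
        fin_cases i <;> simp_all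
    have t0 : tfMon γ δ 0 = 0 := by simp [tfMon, Finsupp.single_apply]
    have t1 : tfMon γ δ 1 = 0 := by simp [tfMon, Finsupp.single_apply]
    have t2 : tfMon γ δ 2 = 0 := by simp [tfMon, Finsupp.single_apply]
    have t3 : tfMon γ δ 3 = 0 := by simp [tfMon, Finsupp.single_apply]
    have t4 : tfMon γ δ 4 = δ := by simp [tfMon, Finsupp.single_apply]
    have t5 : tfMon γ δ 5 = γ := by simp [tfMon, Finsupp.single_apply]
    right
    constructor
    · rw [t5, h5']
    · refine ⟨4, fun l hl => ?_, ?_⟩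
      · have hlv : (l : ℕ) < 4 := hl
        fin_cases l
        · show m 0 = tfMon γ δ 0; rw [t0, h0]
        · show m 1 = tfMon γ δ 1; rw [t1, h1']
        · show m 2 = tfMon γ δ 2; rw [t2, h2']
        · show m 3 = tfMon γ δ 3; rw [t3, h3]
        · exact absurd hlv (by norm_num)
      · show m 4 < tfMon γ δ 4
        rw [t4]; exact h4

/-! ### Auxiliary monomial tools -/

/-- exponent vector -/
def mk6 (a b c d e f : ℕ) : Fin 6 →₀ ℕ :=
  Finsupp.single 0 a + Finsupp.single 1 b + Finsupp.single 2 c + Finsupp.single 3 d +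
    Finsupp.single 4 e + Finsupp.single 5 f

lemma mono_mk6 (a b c d e f : ℕ) (coef : k) :
    monomial (mk6 a b c d e f) coef =
      C coef * (X 0^a * X 1^b * X 2^c * X 3^d * X 4^e * X 5^f) := by
  simp only [X_pow_eq_monomial, C_apply, monomial_mul, one_mul, mul_one]
  rw [mk6]
  congr 1
  abel

lemma num_mul_smul (n : ℕ) [n.AtLeastTwo] (p : MvPolynomial (Fin 6) k) :
    (no_index (OfNat.ofNat n) : MvPolynomial (Fin 6) k) * p = (OfNat.ofNat n : k) • p := by
  rw [← map_ofNat (C : k →+* MvPolynomial (Fin 6) k) n, ← smul_eq_C_mul]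

@[simp] lemma pderiv_ofNat {i : Fin 6} (n : ℕ) [n.AtLeastTwo] :
    pderiv i (no_index (OfNat.ofNat n) : MvPolynomial (Fin 6) k) = 0 := by
  rw [← map_ofNat (C : k →+* MvPolynomial (Fin 6) k) n, pderiv_C]

/-! ### Values of `Del'` -/

lemma del_smul (c : k) (p : MvPolynomial (Fin 6) k) : Del' (c • p) = c • Del' p := by
  simp only [Del', Derivation.map_smul, smul_add, mul_smul_comm]

lemma d40 : Del' (X 4 : MvPolynomial (Fin 6) k) = 0 := by
  simp [Del', pderiv_X_of_ne]

lemma d50 : Del' (X 5 : MvPolynomial (Fin 6) k) = 0 := by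
  simp [Del', pderiv_X_of_ne]

lemma dX0 : Del' (X 0 : MvPolynomial (Fin 6) k) = -(2*(X 3*X 4)) := by
  simp [Del', pderiv_X_self, pderiv_X_of_ne]
  ring

lemma dA1 : Del' (-(2*(X 3*X 4)) : MvPolynomial (Fin 6) k) = 2*(X 4^2*X 5) := by
  simp [Del', pderiv_mul, pderiv_X_self, pderiv_X_of_ne]
  ring

lemma dA2 : Del' (2*(X 4^2*X 5) : MvPolynomial (Fin 6) k) = 0 := by
  simp [Del', pderiv_mul, pderiv_pow, pderiv_X_self, pderiv_X_of_ne]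

lemma dX1 : Del' (X 1 : MvPolynomial (Fin 6) k) = 4*(X 0*X 3) - X 5 := by
  simp [Del', pderiv_X_self, pderiv_X_of_ne]
  ring

lemma dB1 : Del' (4*(X 0*X 3) - X 5 : MvPolynomial (Fin 6) k) =
    -(8*(X 3^2*X 4)) - 4*(X 0*X 4*X 5) := by
  simp [Del', pderiv_mul, pderiv_X_self, pderiv_X_of_ne]
  ring

lemma dB2 : Del' (-(8*(X 3^2*X 4)) - 4*(X 0*X 4*X 5) : MvPolynomial (Fin 6) k) =
    24*(X 3*X 4^2*X 5) := by
  simp [Del', pderiv_mul, pderiv_pow, pderiv_X_self, pderiv_X_of_ne]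
  ring

lemma dB3 : Del' (24*(X 3*X 4^2*X 5) : MvPolynomial (Fin 6) k) = -(24*(X 4^3*X 5^2)) := by
  simp [Del', pderiv_mul, pderiv_pow, pderiv_X_self, pderiv_X_of_ne]
  ring

lemma dB4 : Del' (-(24*(X 4^3*X 5^2)) : MvPolynomial (Fin 6) k) = 0 := by
  simp [Del', pderiv_mul, pderiv_pow, pderiv_X_self, pderiv_X_of_ne]

lemma dX2 : Del' (X 2 : MvPolynomial (Fin 6) k) = 6*(X 1*X 3) + 2*X 4^2 := by
  simp [Del', pderiv_X_self, pderiv_X_of_ne]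
  ring

lemma dC1 : Del' (6*(X 1*X 3) + 2*X 4^2 : MvPolynomial (Fin 6) k) =
    24*(X 0*X 3^2) - 6*(X 3*X 5) - 6*(X 1*X 4*X 5) := by
  simp [Del', pderiv_mul, pderiv_pow, pderiv_X_self, pderiv_X_of_ne]
  ring

lemma dC2 : Del' (24*(X 0*X 3^2) - 6*(X 3*X 5) - 6*(X 1*X 4*X 5) : MvPolynomial (Fin 6) k) =
    -(48*(X 3^3*X 4)) - 72*(X 0*X 3*X 4*X 5) + 12*(X 4*X 5^2) := by
  simp [Del', pderiv_mul, pderiv_pow, pderiv_X_self, pderiv_X_of_ne]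
  ring

lemma dC3 : Del' (-(48*(X 3^3*X 4)) - 72*(X 0*X 3*X 4*X 5) + 12*(X 4*X 5^2) :
    MvPolynomial (Fin 6) k) = 288*(X 3^2*X 4^2*X 5) + 72*(X 0*X 4^2*X 5^2) := by
  simp [Del', pderiv_mul, pderiv_pow, pderiv_X_self, pderiv_X_of_ne]
  ring

lemma dC4 : Del' (288*(X 3^2*X 4^2*X 5) + 72*(X 0*X 4^2*X 5^2) : MvPolynomial (Fin 6) k) =
    -(720*(X 3*X 4^3*X 5^2)) := by
  simp [Del', pderiv_mul, pderiv_pow, pderiv_X_self, pderiv_X_of_ne]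
  ring

lemma dC5 : Del' (-(720*(X 3*X 4^3*X 5^2)) : MvPolynomial (Fin 6) k) = 720*(X 4^4*X 5^3) := by
  simp [Del', pderiv_mul, pderiv_pow, pderiv_X_self, pderiv_X_of_ne]
  ring

lemma dC6 : Del' (720*(X 4^4*X 5^3) : MvPolynomial (Fin 6) k) = 0 := by
  simp [Del', pderiv_mul, pderiv_pow, pderiv_X_self, pderiv_X_of_ne]

/-! ### The polynomials `P1 = φ'(x1), P2 = φ'(x2), P3 = φ'(x3)` -/

def P1 (u : k) : MvPolynomial (Fin 6) k :=
  monomial (mk6 1 0 0 0 0 0) 1 + monomial (mk6 0 0 0 1 1 0) (-(2*u)) +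
    monomial (mk6 0 0 0 0 2 1) (u^2)

def P2 (u : k) : MvPolynomial (Fin 6) k :=
  monomial (mk6 0 1 0 0 0 0) 1 + monomial (mk6 1 0 0 1 0 0) (4*u) +
    monomial (mk6 0 0 0 0 0 1) (-u) + monomial (mk6 0 0 0 2 1 0) (-(4*u^2)) +
    monomial (mk6 1 0 0 0 1 1) (-(2*u^2)) + monomial (mk6 0 0 0 1 2 1) (4*u^3) +
    monomial (mk6 0 0 0 0 3 2) (-(u^4))

def P3 (u : k) : MvPolynomial (Fin 6) k :=
  monomial (mk6 0 0 1 0 0 0) 1 + monomial (mk6 0 1 0 1 0 0) (6*u) +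
    monomial (mk6 0 0 0 0 2 0) (2*u) + monomial (mk6 1 0 0 2 0 0) (12*u^2) +
    monomial (mk6 0 0 0 1 0 1) (-(3*u^2)) + monomial (mk6 0 1 0 0 1 1) (-(3*u^2)) +
    monomial (mk6 0 0 0 3 1 0) (-(8*u^3)) + monomial (mk6 1 0 0 1 1 1) (-(12*u^3)) +
    monomial (mk6 0 0 0 0 1 2) (2*u^3) + monomial (mk6 0 0 0 2 2 1) (12*u^4) +
    monomial (mk6 1 0 0 0 2 2) (3*u^4) + monomial (mk6 0 0 0 1 3 2) (-(6*u^5)) +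
    monomial (mk6 0 0 0 0 4 3) (u^6)

section PhiVals

variable [CharZero k] {u : k} {φ' : MvPolynomial (Fin 6) k ≃ₐ[k] MvPolynomial (Fin 6) k}

lemma phiX4 (hφ' : IsExpOf (fun p => u • Del' p) φ') : φ' (X 4) = X 4 := by
  have h := hφ' (X 4) 1 (by simp [d40])
  simpa using h

lemma phiX5 (hφ' : IsExpOf (fun p => u • Del' p) φ') : φ' (X 5) = X 5 := by
  have h := hφ' (X 5) 1 (by simp [d50])
  simpa using h

lemma phiX0 (hφ' : IsExpOf (fun p => u • Del' p) φ') : φ' (X 0) = P1 u := by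
  have e1 : (fun p : MvPolynomial (Fin 6) k => u • Del' p)^[1] (X 0) =
      u • (-(2*(X 3*X 4))) := by
    show u • Del' (X 0) = _
    rw [dX0]
  have e2 : (fun p : MvPolynomial (Fin 6) k => u • Del' p)^[2] (X 0) =
      u • (u • (2*(X 4^2*X 5))) := by
    show u • Del' (u • Del' (X 0)) = _
    rw [dX0, del_smul, dA1]
  have e3 : (fun p : MvPolynomial (Fin 6) k => u • Del' p)^[3] (X 0) = 0 := by
    have hs : (fun p : MvPolynomial (Fin 6) k => u • Del' p)^[3] (X 0) =
        u • Del' ((fun p : MvPolynomial (Fin 6) k => u • Del' p)^[2] (X 0)) :=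
      Function.iterate_succ_apply' _ 2 _
    rw [hs, e2, del_smul, del_smul, dA2]
    simp
  have h := hφ' (X 0) 3 e3
  rw [Finset.sum_range_succ, Finset.sum_range_succ, Finset.sum_range_one] at h
  rw [e1, e2] at h
  simp only [Function.iterate_zero_apply, Nat.factorial, Nat.cast_one, Nat.cast_ofNat,
    inv_one, one_smul, Nat.mul_one, Nat.one_mul] at h
  rw [h, P1, mono_mk6, mono_mk6, mono_mk6]
  simp only [pow_one, pow_zero, one_mul, mul_one, num_mul_smul, ← smul_eq_C_mul]
  match_scalars <;> field_simp <;> ring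

lemma phiX1 (hφ' : IsExpOf (fun p => u • Del' p) φ') : φ' (X 1) = P2 u := by
  have e1 : (fun p : MvPolynomial (Fin 6) k => u • Del' p)^[1] (X 1) =
      u • (4*(X 0*X 3) - X 5) := by
    show u • Del' (X 1) = _
    rw [dX1]
  have e2 : (fun p : MvPolynomial (Fin 6) k => u • Del' p)^[2] (X 1) =
      u • (u • (-(8*(X 3^2*X 4)) - 4*(X 0*X 4*X 5))) := by
    show u • Del' ((fun p : MvPolynomial (Fin 6) k => u • Del' p)^[1] (X 1)) = _
    rw [e1, del_smul, dB1]
  have e3 : (fun p : MvPolynomial (Fin 6) k => u • Del' p)^[3] (X 1) =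
      u • (u • (u • (24*(X 3*X 4^2*X 5)))) := by
    show u • Del' ((fun p : MvPolynomial (Fin 6) k => u • Del' p)^[2] (X 1)) = _
    rw [e2, del_smul, del_smul, dB2]
  have e4 : (fun p : MvPolynomial (Fin 6) k => u • Del' p)^[4] (X 1) =
      u • (u • (u • (u • (-(24*(X 4^3*X 5^2)))))) := by
    show u • Del' ((fun p : MvPolynomial (Fin 6) k => u • Del' p)^[3] (X 1)) = _
    rw [e3, del_smul, del_smul, del_smul, dB3]
  have e5 : (fun p : MvPolynomial (Fin 6) k => u • Del' p)^[5] (X 1) = 0 := by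
    have hs : (fun p : MvPolynomial (Fin 6) k => u • Del' p)^[5] (X 1) =
        u • Del' ((fun p : MvPolynomial (Fin 6) k => u • Del' p)^[4] (X 1)) :=
      Function.iterate_succ_apply' _ 4 _
    rw [hs, e4, del_smul, del_smul, del_smul, del_smul, dB4]
    simp
  have h := hφ' (X 1) 5 e5
  rw [Finset.sum_range_succ, Finset.sum_range_succ, Finset.sum_range_succ,
    Finset.sum_range_succ, Finset.sum_range_one] at h
  rw [e1, e2, e3, e4] at h
  simp only [Function.iterate_zero_apply, Nat.factorial, Nat.cast_one, Nat.cast_ofNat,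
    inv_one, one_smul, Nat.mul_one, Nat.one_mul] at h
  norm_num at h
  rw [h, P2]
  rw [mono_mk6, mono_mk6, mono_mk6, mono_mk6, mono_mk6, mono_mk6, mono_mk6]
  simp only [pow_one, pow_zero, one_mul, mul_one, num_mul_smul, ← smul_eq_C_mul]
  match_scalars <;> field_simp <;> ring

lemma phiX2 (hφ' : IsExpOf (fun p => u • Del' p) φ') : φ' (X 2) = P3 u := by
  have e1 : (fun p : MvPolynomial (Fin 6) k => u • Del' p)^[1] (X 2) =
      u • (6*(X 1*X 3) + 2*X 4^2) := by
    show u • Del' (X 2) = _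
    rw [dX2]
  have e2 : (fun p : MvPolynomial (Fin 6) k => u • Del' p)^[2] (X 2) =
      u • (u • (24*(X 0*X 3^2) - 6*(X 3*X 5) - 6*(X 1*X 4*X 5))) := by
    show u • Del' ((fun p : MvPolynomial (Fin 6) k => u • Del' p)^[1] (X 2)) = _
    rw [e1, del_smul, dC1]
  have e3 : (fun p : MvPolynomial (Fin 6) k => u • Del' p)^[3] (X 2) =
      u • (u • (u • (-(48*(X 3^3*X 4)) - 72*(X 0*X 3*X 4*X 5) + 12*(X 4*X 5^2)))) := by
    show u • Del' ((fun p : MvPolynomial (Fin 6) k => u • Del' p)^[2] (X 2)) = _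
    rw [e2, del_smul, del_smul, dC2]
  have e4 : (fun p : MvPolynomial (Fin 6) k => u • Del' p)^[4] (X 2) =
      u • (u • (u • (u • (288*(X 3^2*X 4^2*X 5) + 72*(X 0*X 4^2*X 5^2))))) := by
    show u • Del' ((fun p : MvPolynomial (Fin 6) k => u • Del' p)^[3] (X 2)) = _
    rw [e3, del_smul, del_smul, del_smul, dC3]
  have e5 : (fun p : MvPolynomial (Fin 6) k => u • Del' p)^[5] (X 2) =
      u • (u • (u • (u • (u • (-(720*(X 3*X 4^3*X 5^2))))))) := by
    show u • Del' ((fun p : MvPolynomial (Fin 6) k => u • Del' p)^[4] (X 2)) = _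
    rw [e4, del_smul, del_smul, del_smul, del_smul, dC4]
  have e6 : (fun p : MvPolynomial (Fin 6) k => u • Del' p)^[6] (X 2) =
      u • (u • (u • (u • (u • (u • (720*(X 4^4*X 5^3))))))) := by
    show u • Del' ((fun p : MvPolynomial (Fin 6) k => u • Del' p)^[5] (X 2)) = _
    rw [e5, del_smul, del_smul, del_smul, del_smul, del_smul, dC5]
  have e7 : (fun p : MvPolynomial (Fin 6) k => u • Del' p)^[7] (X 2) = 0 := by
    have hs : (fun p : MvPolynomial (Fin 6) k => u • Del' p)^[7] (X 2) =
        u • Del' ((fun p : MvPolynomial (Fin 6) k => u • Del' p)^[6] (X 2)) :=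
      Function.iterate_succ_apply' _ 6 _
    rw [hs, e6, del_smul, del_smul, del_smul, del_smul, del_smul, del_smul, dC6]
    simp
  have h := hφ' (X 2) 7 e7
  rw [Finset.sum_range_succ, Finset.sum_range_succ, Finset.sum_range_succ,
    Finset.sum_range_succ, Finset.sum_range_succ, Finset.sum_range_succ,
    Finset.sum_range_one] at h
  rw [e1, e2, e3, e4, e5, e6] at h
  simp only [Function.iterate_zero_apply, Nat.factorial, Nat.cast_one, Nat.cast_ofNat,
    inv_one, one_smul, Nat.mul_one, Nat.one_mul] at h
  norm_num at h
  rw [h, P3]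
  rw [mono_mk6, mono_mk6, mono_mk6, mono_mk6, mono_mk6, mono_mk6, mono_mk6, mono_mk6,
    mono_mk6, mono_mk6, mono_mk6, mono_mk6, mono_mk6]
  simp only [pow_one, pow_zero, one_mul, mul_one, num_mul_smul, ← smul_eq_C_mul]
  match_scalars <;> field_simp <;> ring

end PhiVals

/-! ### Degree and coefficient facts for `P1, P2, P3` -/

/-- auxiliary weight for leading-term extraction -/
def omg : Fin 6 → ℕ := ![0, 0, 0, 0, 1, 2]

lemma omg_vals : omg 0 = 0 ∧ omg 1 = 0 ∧ omg 2 = 0 ∧ omg 3 = 0 ∧ omg 4 = 1 ∧ omg 5 = 2 :=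
  ⟨rfl, rfl, rfl, rfl, rfl, rfl⟩

lemma Wdeg_mk6 (ω : Fin 6 → ℕ) (a b c d e f : ℕ) :
    Wdeg ω (mk6 a b c d e f) = a * ω 0 + b * ω 1 + c * ω 2 + d * ω 3 + e * ω 4 + f * ω 5 := by
  simp [mk6, Wdeg_add, Wdeg_single]

lemma Wdeg_w1_mk6 (a b c d e f : ℕ) : Wdeg w1 (mk6 a b c d e f) = a + 2*b + 3*c + d + f := by
  obtain ⟨e0, e1, e2, e3, e4, e5⟩ := w1_vals
  rw [Wdeg_mk6, e0, e1, e2, e3, e4, e5]; ring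

lemma Wdeg_w2_mk6 (a b c d e f : ℕ) : Wdeg w2 (mk6 a b c d e f) = e := by
  obtain ⟨e0, e1, e2, e3, e4, e5⟩ := w2_vals
  rw [Wdeg_mk6, e0, e1, e2, e3, e4, e5]; ring

lemma Wdeg_omg_mk6 (a b c d e f : ℕ) : Wdeg omg (mk6 a b c d e f) = e + 2*f := by
  obtain ⟨e0, e1, e2, e3, e4, e5⟩ := omg_vals
  rw [Wdeg_mk6, e0, e1, e2, e3, e4, e5]; ring

lemma mk6_tfMon (e f : ℕ) : mk6 0 0 0 0 e f = tfMon f e := by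
  simp [mk6, tfMon, Finsupp.single_zero]

lemma Wdeg_omg_tfMon (γ δ : ℕ) : Wdeg omg (tfMon γ δ) = δ + 2*γ := by
  rw [← mk6_tfMon, Wdeg_omg_mk6]

lemma tfMon_add (γ δ γ' δ' : ℕ) : tfMon γ δ + tfMon γ' δ' = tfMon (γ+γ') (δ+δ') := by
  simp [tfMon, Finsupp.single_add]
  abel

lemma mk6_apply (a b c d e f : ℕ) :
    mk6 a b c d e f 0 = a ∧ mk6 a b c d e f 1 = b ∧ mk6 a b c d e f 2 = c ∧
      mk6 a b c d e f 3 = d ∧ mk6 a b c d e f 4 = e ∧ mk6 a b c d e f 5 = f := by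
  refine ⟨?_, ?_, ?_, ?_, ?_, ?_⟩ <;> simp [mk6, Finsupp.single_apply]

lemma mk6_eq_iff {a b c d e f a' b' c' d' e' f' : ℕ} :
    mk6 a b c d e f = mk6 a' b' c' d' e' f' ↔
      (a = a' ∧ b = b' ∧ c = c' ∧ d = d' ∧ e = e' ∧ f = f') := by
  constructor
  · intro h
    obtain ⟨p0, p1, p2, p3, p4, p5⟩ := mk6_apply a b c d e f
    obtain ⟨q0, q1, q2, q3, q4, q5⟩ := mk6_apply a' b' c' d' e' f'
    refine ⟨?_, ?_, ?_, ?_, ?_, ?_⟩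
    · rw [← p0, ← q0, h]
    · rw [← p1, ← q1, h]
    · rw [← p2, ← q2, h]
    · rw [← p3, ← q3, h]
    · rw [← p4, ← q4, h]
    · rw [← p5, ← q5, h]
  · rintro ⟨rfl, rfl, rfl, rfl, rfl, rfl⟩; rfl

lemma bdP1w1 (u : k) : Bd w1 (P1 u) 1 := by
  rw [P1]
  repeat' apply Bd_add
  all_goals (apply Bd_monomial; rw [Wdeg_w1_mk6]; try norm_num)

lemma bdP1w2 (u : k) : Bd w2 (P1 u) 2 := by
  rw [P1]
  repeat' apply Bd_add
  all_goals (apply Bd_monomial; rw [Wdeg_w2_mk6]; try norm_num)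

lemma bdP2w1 (u : k) : Bd w1 (P2 u) 2 := by
  rw [P2]
  repeat' apply Bd_add
  all_goals (apply Bd_monomial; rw [Wdeg_w1_mk6]; try norm_num)

lemma bdP2w2 (u : k) : Bd w2 (P2 u) 3 := by
  rw [P2]
  repeat' apply Bd_add
  all_goals (apply Bd_monomial; rw [Wdeg_w2_mk6]; try norm_num)

lemma bdP3w1 (u : k) : Bd w1 (P3 u) 3 := by
  rw [P3]
  repeat' apply Bd_add
  all_goals (apply Bd_monomial; rw [Wdeg_w1_mk6]; try norm_num)

lemma bdP3w2 (u : k) : Bd w2 (P3 u) 4 := by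
  rw [P3]
  repeat' apply Bd_add
  all_goals (apply Bd_monomial; rw [Wdeg_w2_mk6]; try norm_num)

lemma topP1 (u : k) : TopBd omg (P1 u) 4 (tfMon 1 2) := by
  rw [P1, ← mk6_tfMon]
  apply TopBd_add_right (W' := 1)
  · apply Bd_add <;> (apply Bd_monomial; rw [Wdeg_omg_mk6]; try norm_num)
  · exact TopBd_monomial (by rw [Wdeg_omg_mk6])
  · norm_num

lemma topP2 (u : k) : TopBd omg (P2 u) 7 (tfMon 2 3) := by
  rw [P2, ← mk6_tfMon]
  apply TopBd_add_right (W' := 4)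
  · repeat' apply Bd_add
    all_goals (apply Bd_monomial; rw [Wdeg_omg_mk6]; try norm_num)
  · exact TopBd_monomial (by rw [Wdeg_omg_mk6])
  · norm_num

lemma topP3 (u : k) : TopBd omg (P3 u) 10 (tfMon 3 4) := by
  rw [P3, ← mk6_tfMon]
  apply TopBd_add_right (W' := 7)
  · repeat' apply Bd_add
    all_goals (apply Bd_monomial; rw [Wdeg_omg_mk6]; try norm_num)
  · exact TopBd_monomial (by rw [Wdeg_omg_mk6])
  · norm_num

lemma cfP1 (u : k) : coeff (tfMon 1 2) (P1 u) = u^2 := by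
  rw [P1, ← mk6_tfMon]
  simp [coeff_add, coeff_monomial, mk6_eq_iff]

lemma cfP2 (u : k) : coeff (tfMon 2 3) (P2 u) = -(u^4) := by
  rw [P2, ← mk6_tfMon]
  simp [coeff_add, coeff_monomial, mk6_eq_iff]

lemma cfP3 (u : k) : coeff (tfMon 3 4) (P3 u) = u^6 := by
  rw [P3, ← mk6_tfMon]
  simp [coeff_add, coeff_monomial, mk6_eq_iff]

lemma X4_mono : (X 4 : MvPolynomial (Fin 6) k) = monomial (tfMon 0 1) 1 := by
  rw [← mk6_tfMon, mono_mk6]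
  simp

lemma topX4 : TopBd omg (X 4 : MvPolynomial (Fin 6) k) 1 (tfMon 0 1) := by
  rw [X4_mono]
  exact TopBd_monomial (by rw [Wdeg_omg_tfMon])

lemma cfX4 : coeff (tfMon 0 1) (X 4 : MvPolynomial (Fin 6) k) = 1 := by
  rw [X4_mono, coeff_monomial, if_pos rfl]

lemma bdX4w1 : Bd w1 (X 4 : MvPolynomial (Fin 6) k) 0 := by
  rw [X4_mono]
  apply Bd_monomial
  rw [← mk6_tfMon, Wdeg_w1_mk6]

lemma bdX4w2 : Bd w2 (X 4 : MvPolynomial (Fin 6) k) 1 := by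
  rw [X4_mono]
  apply Bd_monomial
  rw [← mk6_tfMon, Wdeg_w2_mk6]

/-- convenience: `Bd` of `C c * p` -/
lemma Bd_Cmul {ω : Fin 6 → ℕ} {p : MvPolynomial (Fin 6) k} {W : ℕ} (c : k) (hp : Bd ω p W) :
    Bd ω (C c * p) W :=
  Bd_mul (Bd_C c 0) hp (by omega)

lemma Bd_numMul {ω : Fin 6 → ℕ} {p : MvPolynomial (Fin 6) k} {W : ℕ} (n : ℕ) [n.AtLeastTwo]
    (hp : Bd ω p W) : Bd ω ((no_index (OfNat.ofNat n) : MvPolynomial (Fin 6) k) * p) W := by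
  rw [← map_ofNat (C : k →+* MvPolynomial (Fin 6) k) n]
  exact Bd_Cmul _ hp

lemma TopBd_pow2 {ω : Fin 6 → ℕ} {p : MvPolynomial (Fin 6) k} {W : ℕ} {m : Fin 6 →₀ ℕ}
    (hp : TopBd ω p W m) : TopBd ω (p^2) (W+W) (m+m) := by
  rw [pow_two]; exact TopBd_mul hp hp

lemma TopBd_pow3 {ω : Fin 6 → ℕ} {p : MvPolynomial (Fin 6) k} {W : ℕ} {m : Fin 6 →₀ ℕ}
    (hp : TopBd ω p W m) : TopBd ω (p^3) (W+W+W) (m+m+m) := by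
  rw [pow_succ, pow_two]; exact TopBd_mul (TopBd_mul hp hp) hp

lemma coeff_pow2_topBd {ω : Fin 6 → ℕ} {p : MvPolynomial (Fin 6) k} {W : ℕ} {m : Fin 6 →₀ ℕ}
    (hp : TopBd ω p W m) (e : Wdeg ω m = W) : coeff (m+m) (p^2) = coeff m p * coeff m p := by
  rw [pow_two]; exact coeff_mul_topBd hp hp e e

lemma coeff_pow3_topBd {ω : Fin 6 → ℕ} {p : MvPolynomial (Fin 6) k} {W : ℕ} {m : Fin 6 →₀ ℕ}
    (hp : TopBd ω p W m) (e : Wdeg ω m = W) :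
    coeff (m+m+m) (p^3) = coeff m p * coeff m p * coeff m p := by
  rw [pow_succ, pow_two]
  rw [coeff_mul_topBd (TopBd_mul hp hp) hp (by rw [Wdeg_add, e]) e]
  rw [coeff_mul_topBd hp hp e e]

lemma Bd_pow2 {ω : Fin 6 → ℕ} {p : MvPolynomial (Fin 6) k} {W W' : ℕ}
    (hp : Bd ω p W) (h : W + W ≤ W') : Bd ω (p^2) W' := by
  rw [pow_two]; exact Bd_mul hp hp h

lemma Bd_pow3 {ω : Fin 6 → ℕ} {p : MvPolynomial (Fin 6) k} {W W' : ℕ}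
    (hp : Bd ω p W) (h : W + W + W ≤ W') : Bd ω (p^3) W' := by
  rw [pow_succ, pow_two]; exact Bd_mul (Bd_mul hp hp (le_refl _)) hp h

lemma TopBd_mul_tf {p q : MvPolynomial (Fin 6) k} {W₁ W₂ γ₁ δ₁ γ₂ δ₂ : ℕ}
    (hp : TopBd omg p W₁ (tfMon γ₁ δ₁)) (hq : TopBd omg q W₂ (tfMon γ₂ δ₂)) :
    TopBd omg (p * q) (W₁ + W₂) (tfMon (γ₁+γ₂) (δ₁+δ₂)) := by
  have h := TopBd_mul hp hq
  rwa [tfMon_add] at h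

lemma TopBd_pow2_tf {p : MvPolynomial (Fin 6) k} {W γ δ : ℕ}
    (hp : TopBd omg p W (tfMon γ δ)) : TopBd omg (p^2) (W+W) (tfMon (γ+γ) (δ+δ)) := by
  have h := TopBd_pow2 hp
  rwa [tfMon_add] at h

lemma coeff_mul_tops {p q : MvPolynomial (Fin 6) k} {W₁ W₂ : ℕ} {γ₁ δ₁ γ₂ δ₂ γ δ : ℕ}
    (hp : TopBd omg p W₁ (tfMon γ₁ δ₁)) (hq : TopBd omg q W₂ (tfMon γ₂ δ₂))
    (e1 : δ₁ + 2*γ₁ = W₁) (e2 : δ₂ + 2*γ₂ = W₂) (hγ : γ₁ + γ₂ = γ) (hδ : δ₁ + δ₂ = δ) :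
    coeff (tfMon γ δ) (p*q) = coeff (tfMon γ₁ δ₁) p * coeff (tfMon γ₂ δ₂) q := by
  have h := coeff_mul_topBd hp hq (by rw [Wdeg_omg_tfMon, e1]) (by rw [Wdeg_omg_tfMon, e2])
  rwa [tfMon_add, hγ, hδ] at h

lemma coeff_pow2_tops {p : MvPolynomial (Fin 6) k} {W : ℕ} {γ₁ δ₁ γ δ : ℕ}
    (hp : TopBd omg p W (tfMon γ₁ δ₁)) (e1 : δ₁ + 2*γ₁ = W)
    (hγ : γ₁ + γ₁ = γ) (hδ : δ₁ + δ₁ = δ) :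
    coeff (tfMon γ δ) (p^2) = coeff (tfMon γ₁ δ₁) p * coeff (tfMon γ₁ δ₁) p := by
  have h := coeff_pow2_topBd hp (by rw [Wdeg_omg_tfMon, e1])
  rwa [tfMon_add, hγ, hδ] at h

lemma coeff_pow3_tops {p : MvPolynomial (Fin 6) k} {W : ℕ} {γ₁ δ₁ γ δ : ℕ}
    (hp : TopBd omg p W (tfMon γ₁ δ₁)) (e1 : δ₁ + 2*γ₁ = W)
    (hγ : γ₁ + γ₁ + γ₁ = γ) (hδ : δ₁ + δ₁ + δ₁ = δ) :
    coeff (tfMon γ δ) (p^3) =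
      coeff (tfMon γ₁ δ₁) p * coeff (tfMon γ₁ δ₁) p * coeff (tfMon γ₁ δ₁) p := by
  have h := coeff_pow3_topBd hp (by rw [Wdeg_omg_tfMon, e1])
  rwa [tfMon_add, tfMon_add, hγ, hδ] at h

set_option maxHeartbeats 4000000 in
theorem statement17' [CharZero k]
    (u : k) (hu : u ≠ 0)
    (φ' : MvPolynomial (Fin 6) k ≃ₐ[k] MvPolynomial (Fin 6) k)
    (hφ' : IsExpOf (fun p => u • Del' p) φ')
    (A : Matrix (Fin 3) (Fin 3) k) (d : Fin 3 → k)
    (ha20 : A 2 0 ≠ 0) (ha11 : A 1 1 ≠ 0) (ha02 : A 0 2 ≠ 0)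
    (hA21 : A 2 1 = 0) (hA12 : A 1 2 = 0) (hA22 : A 2 2 = 0) :
    CondC 3 2 1 φ' (hatLift A d) := by
  have hφC : ∀ a : k, φ' (C a) = C a := by
    intro a
    have h := φ'.commutes a
    rwa [algebraMap_eq] at h
  have iota0 : X (ι36 0) = (X 0 : MvPolynomial (Fin 6) k) := rfl
  have iota1 : X (ι36 1) = (X 1 : MvPolynomial (Fin 6) k) := rfl
  have iota2 : X (ι36 2) = (X 2 : MvPolynomial (Fin 6) k) := rfl
  have hY : ∀ j : Fin 3, φ' (affImg A d j) =
      C (A 0 j) * P1 u + C (A 1 j) * P2 u + C (A 2 j) * P3 u + C (d j) := by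
    intro j
    rw [affImg, Fin.sum_univ_three, iota0, iota1, iota2]
    rw [map_add, map_add, map_add, map_mul, map_mul, map_mul, hφC, hφC, hφC, hφC,
      phiX0 hφ', phiX1 hφ', phiX2 hφ']
  -- normal form of T = φ'(hatTf)
  have hTnf : φ' (hatTf A d) =
      C (A 0 2*A 2 0 - A 1 1^2) * (P2 u)^2 + C (A 0 2*A 1 0 - 2*(A 0 1*A 1 1)) * (P1 u * P2 u)
      + C (A 0 0*A 0 2 - A 0 1^2) * (P1 u)^2
      + C (A 0 2*d 0 + A 0 0*d 2 - 2*(A 0 1*d 1)) * P1 u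
      + C (A 1 0*d 2 - 2*(A 1 1*d 1)) * P2 u
      + C (A 2 0*d 2) * P3 u + C (d 0*d 2 - d 1^2) + C (A 0 2*A 2 0) * X 4 := by
    rw [hatTf]
    rw [map_add, map_sub, map_mul, map_pow, map_mul, map_sub, map_sub, map_mul, map_pow,
      hY 0, hY 1, hY 2, hφC, phiX4 hφ', phiX0 hφ', phiX1 hφ', phiX2 hφ']
    simp only [hA21, hA12, hA22, map_sub, map_add, map_mul, map_pow, map_ofNat, map_zero]
    ring
  -- Y-forms
  have hY0 : φ' (affImg A d 0) =
      (C (A 0 0) * P1 u + C (A 1 0) * P2 u + C (d 0)) + C (A 2 0) * P3 u := by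
    rw [hY 0]; ring
  have hY1 : φ' (affImg A d 1) = (C (A 0 1) * P1 u + C (d 1)) + C (A 1 1) * P2 u := by
    rw [hY 1, hA21, C_0]; ring
  have hY2 : φ' (affImg A d 2) = C (d 2) + C (A 0 2) * P1 u := by
    rw [hY 2, hA12, hA22, C_0]; ring
  -- degree facts for the Y's
  have bdY0w1 : Bd w1 (φ' (affImg A d 0)) 3 := by
    rw [hY0]
    exact Bd_add (Bd_add (Bd_add (Bd_Cmul _ (Bd_mono (bdP1w1 u) (by norm_num)))
      (Bd_Cmul _ (Bd_mono (bdP2w1 u) (by norm_num)))) (Bd_C _ _))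
      (Bd_Cmul _ (bdP3w1 u))
  have bdY0w2 : Bd w2 (φ' (affImg A d 0)) 4 := by
    rw [hY0]
    exact Bd_add (Bd_add (Bd_add (Bd_Cmul _ (Bd_mono (bdP1w2 u) (by norm_num)))
      (Bd_Cmul _ (Bd_mono (bdP2w2 u) (by norm_num)))) (Bd_C _ _))
      (Bd_Cmul _ (bdP3w2 u))
  have bdY1w1 : Bd w1 (φ' (affImg A d 1)) 2 := by
    rw [hY1]
    exact Bd_add (Bd_add (Bd_Cmul _ (Bd_mono (bdP1w1 u) (by norm_num))) (Bd_C _ _))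
      (Bd_Cmul _ (bdP2w1 u))
  have bdY1w2 : Bd w2 (φ' (affImg A d 1)) 3 := by
    rw [hY1]
    exact Bd_add (Bd_add (Bd_Cmul _ (Bd_mono (bdP1w2 u) (by norm_num))) (Bd_C _ _))
      (Bd_Cmul _ (bdP2w2 u))
  have bdY2w1 : Bd w1 (φ' (affImg A d 2)) 1 := by
    rw [hY2]
    exact Bd_add (Bd_C _ _) (Bd_Cmul _ (bdP1w1 u))
  have bdY2w2 : Bd w2 (φ' (affImg A d 2)) 2 := by
    rw [hY2]
    exact Bd_add (Bd_C _ _) (Bd_Cmul _ (bdP1w2 u))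
  have topY0 : TopBd omg (φ' (affImg A d 0)) 10 (tfMon 3 4) := by
    rw [hY0]
    refine TopBd_add_right (W' := 7) ?_ (TopBd_C_mul _ (topP3 u)) (by norm_num)
    exact Bd_add (Bd_add (Bd_Cmul _ (Bd_mono (topP1 u).bd (by norm_num)))
      (Bd_Cmul _ (topP2 u).bd)) (Bd_C _ _)
  have topY1 : TopBd omg (φ' (affImg A d 1)) 7 (tfMon 2 3) := by
    rw [hY1]
    refine TopBd_add_right (W' := 4) ?_ (TopBd_C_mul _ (topP2 u)) (by norm_num)
    exact Bd_add (Bd_Cmul _ (topP1 u).bd) (Bd_C _ _)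
  have topY2 : TopBd omg (φ' (affImg A d 2)) 4 (tfMon 1 2) := by
    rw [hY2]
    refine TopBd_add_right (W' := 0) ?_ (TopBd_C_mul _ (topP1 u)) (by norm_num)
    exact Bd_C _ _
  have cfY0 : coeff (tfMon 3 4) (φ' (affImg A d 0)) = A 2 0 * u^6 := by
    rw [hY0, coeff_add, coeff_C_mul, cfP3]
    have h0 : coeff (tfMon 3 4) (C (A 0 0) * P1 u + C (A 1 0) * P2 u + C (d 0)) = 0 := by
      refine Bd.coeff_eq_zero (W := 7) ?_ (by rw [Wdeg_omg_tfMon]; norm_num)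
      exact Bd_add (Bd_add (Bd_Cmul _ (Bd_mono (topP1 u).bd (by norm_num)))
        (Bd_Cmul _ (topP2 u).bd)) (Bd_C _ _)
    rw [h0, zero_add]
  have cfY1 : coeff (tfMon 2 3) (φ' (affImg A d 1)) = A 1 1 * (-(u^4)) := by
    rw [hY1, coeff_add, coeff_C_mul, cfP2]
    have h0 : coeff (tfMon 2 3) (C (A 0 1) * P1 u + C (d 1)) = 0 := by
      refine Bd.coeff_eq_zero (W := 4) ?_ (by rw [Wdeg_omg_tfMon]; norm_num)
      exact Bd_add (Bd_Cmul _ (topP1 u).bd) (Bd_C _ _)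
    rw [h0, zero_add]
  have cfY2 : coeff (tfMon 1 2) (φ' (affImg A d 2)) = A 0 2 * u^2 := by
    rw [hY2, coeff_add, coeff_C_mul, cfP1]
    have h0 : coeff (tfMon 1 2) (C (d 2) : MvPolynomial (Fin 6) k) = 0 := by
      refine Bd.coeff_eq_zero (W := 0) (Bd_C _ _) (by rw [Wdeg_omg_tfMon]; norm_num)
    rw [h0, zero_add]
  -- images of t_r, t_f, t_g under the lift, then φ'
  have h3 : hatLift A d (X 3) = affImg A d 1 * hatTf A d + affImg A d 0 ^ 2 := by
    rw [hatLift, aeval_X]; rfl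
  have h4 : hatLift A d (X 4) = hatTf A d := by
    rw [hatLift, aeval_X]; rfl
  have h5 : hatLift A d (X 5) = affImg A d 2 * hatTf A d ^ 2 +
      2 * affImg A d 0 * affImg A d 1 * hatTf A d + affImg A d 0 ^ 3 := by
    rw [hatLift, aeval_X]; rfl
  have hQr : φ' (hatLift A d (X 3)) =
      φ' (affImg A d 1) * φ' (hatTf A d) + φ' (affImg A d 0) ^ 2 := by
    rw [h3, map_add, map_mul, map_pow]
  have hQf : φ' (hatLift A d (X 4)) = φ' (hatTf A d) := by rw [h4]
  have hQg : φ' (hatLift A d (X 5)) =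
      φ' (affImg A d 2) * φ' (hatTf A d) ^ 2 +
        2 * φ' (affImg A d 0) * φ' (affImg A d 1) * φ' (hatTf A d) +
        φ' (affImg A d 0) ^ 3 := by
    rw [h5]
    simp only [map_add, map_mul, map_pow, map_ofNat]
  -- shorthand bound facts
  have bd1o := (topP1 (k := k) u).bd
  have bd2o := (topP2 (k := k) u).bd
  have bd3o := (topP3 (k := k) u).bd
  have bdX4o := (topX4 (k := k)).bd
  by_cases he : A 0 2*A 2 0 - A 1 1^2 = 0
  · -- CASE B : e = 0
    have hTB : φ' (hatTf A d) =
        C (A 0 2*A 1 0 - 2*(A 0 1*A 1 1)) * (P1 u * P2 u)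
        + C (A 0 0*A 0 2 - A 0 1^2) * (P1 u)^2
        + C (A 0 2*d 0 + A 0 0*d 2 - 2*(A 0 1*d 1)) * P1 u
        + C (A 1 0*d 2 - 2*(A 1 1*d 1)) * P2 u
        + C (A 2 0*d 2) * P3 u + C (d 0*d 2 - d 1^2) + C (A 0 2*A 2 0) * X 4 := by
      rw [hTnf, he, C_0, zero_mul, zero_add]
    have bdTo : Bd omg (φ' (hatTf A d)) 11 := by
      rw [hTB]
      exact Bd_add (Bd_add (Bd_add (Bd_add (Bd_add (Bd_add
        (Bd_Cmul _ (Bd_mul bd1o bd2o (by norm_num)))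
        (Bd_Cmul _ (Bd_pow2 bd1o (by norm_num))))
        (Bd_Cmul _ (Bd_mono bd1o (by norm_num))))
        (Bd_Cmul _ (Bd_mono bd2o (by norm_num))))
        (Bd_Cmul _ (Bd_mono bd3o (by norm_num))))
        (Bd_C _ _))
        (Bd_Cmul _ (Bd_mono bdX4o (by norm_num)))
    have bdTw1 : Bd w1 (φ' (hatTf A d)) 3 := by
      rw [hTB]
      exact Bd_add (Bd_add (Bd_add (Bd_add (Bd_add (Bd_add
        (Bd_Cmul _ (Bd_mul (bdP1w1 u) (bdP2w1 u) (by norm_num)))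
        (Bd_Cmul _ (Bd_pow2 (bdP1w1 u) (by norm_num))))
        (Bd_Cmul _ (Bd_mono (bdP1w1 u) (by norm_num))))
        (Bd_Cmul _ (Bd_mono (bdP2w1 u) (by norm_num))))
        (Bd_Cmul _ (bdP3w1 u)))
        (Bd_C _ _))
        (Bd_Cmul _ (Bd_mono bdX4w1 (by norm_num)))
    have bdTw2 : Bd w2 (φ' (hatTf A d)) 5 := by
      rw [hTB]
      exact Bd_add (Bd_add (Bd_add (Bd_add (Bd_add (Bd_add
        (Bd_Cmul _ (Bd_mul (bdP1w2 u) (bdP2w2 u) (by norm_num)))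
        (Bd_Cmul _ (Bd_pow2 (bdP1w2 u) (by norm_num))))
        (Bd_Cmul _ (Bd_mono (bdP1w2 u) (by norm_num))))
        (Bd_Cmul _ (Bd_mono (bdP2w2 u) (by norm_num))))
        (Bd_Cmul _ (Bd_mono (bdP3w2 u) (by norm_num))))
        (Bd_C _ _))
        (Bd_Cmul _ (Bd_mono bdX4w2 (by norm_num)))
    -- Q_r ∈ P_{6,8}
    have QrB : φ' (hatLift A d (X 3)) ∈ Pset 6 8 := by
      apply mem_Pset
      · apply Bd.wtd
        rw [hQr]
        exact Bd_add (Bd_mul bdY1w1 bdTw1 (by norm_num)) (Bd_pow2 bdY0w1 (by norm_num))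
      · apply Bd.wtd
        rw [hQr]
        exact Bd_add (Bd_mul bdY1w2 bdTw2 (by norm_num)) (Bd_pow2 bdY0w2 (by norm_num))
      · rw [hQr, coeff_add]
        have h1 : coeff (tfMon 6 8) (φ' (affImg A d 1) * φ' (hatTf A d)) = 0 :=
          Bd.coeff_eq_zero (W := 18) (Bd_mul topY1.bd bdTo (by norm_num))
            (by rw [Wdeg_omg_tfMon]; norm_num)
        have h2 := coeff_pow2_tops (γ := 6) (δ := 8) topY0 (by norm_num) (by norm_num)
          (by norm_num)
        rw [h1, h2, cfY0, zero_add]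
        exact mul_ne_zero (mul_ne_zero ha20 (pow_ne_zero _ hu))
          (mul_ne_zero ha20 (pow_ne_zero _ hu))
    -- Q_g ∈ P_{9,12}
    have QgB : φ' (hatLift A d (X 5)) ∈ Pset 9 12 := by
      apply mem_Pset
      · apply Bd.wtd
        rw [hQg]
        refine Bd_add (Bd_add ?_ ?_) (Bd_pow3 bdY0w1 (by norm_num))
        · exact Bd_mul bdY2w1 (Bd_pow2 (W' := 6) bdTw1 (by norm_num)) (by norm_num)
        · exact Bd_mul (Bd_mul (W := 5) (Bd_numMul 2 bdY0w1) bdY1w1 (by norm_num)) bdTw1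
            (by norm_num)
      · apply Bd.wtd
        rw [hQg]
        refine Bd_add (Bd_add ?_ ?_) (Bd_pow3 bdY0w2 (by norm_num))
        · exact Bd_mul bdY2w2 (Bd_pow2 (W' := 10) bdTw2 (by norm_num)) (by norm_num)
        · exact Bd_mul (Bd_mul (W := 7) (Bd_numMul 2 bdY0w2) bdY1w2 (by norm_num)) bdTw2
            (by norm_num)
      · rw [hQg, coeff_add, coeff_add]
        have h1 : coeff (tfMon 9 12) (φ' (affImg A d 2) * φ' (hatTf A d) ^ 2) = 0 :=
          Bd.coeff_eq_zero (W := 26)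
            (Bd_mul topY2.bd (Bd_pow2 (W' := 22) bdTo (by norm_num)) (by norm_num))
            (by rw [Wdeg_omg_tfMon]; norm_num)
        have h2 : coeff (tfMon 9 12)
            (2 * φ' (affImg A d 0) * φ' (affImg A d 1) * φ' (hatTf A d)) = 0 :=
          Bd.coeff_eq_zero (W := 28)
            (Bd_mul (Bd_mul (W := 17) (Bd_numMul 2 topY0.bd) topY1.bd (by norm_num))
            bdTo (by norm_num)) (by rw [Wdeg_omg_tfMon]; norm_num)
        have h3 := coeff_pow3_tops (γ := 9) (δ := 12) topY0 (by norm_num) (by norm_num)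
          (by norm_num)
        rw [h1, h2, h3, cfY0, zero_add, zero_add]
        have hne := mul_ne_zero ha20 (pow_ne_zero 6 hu)
        exact mul_ne_zero (mul_ne_zero hne hne) hne
    -- Q_f, by sub-cases
    by_cases hs : A 0 2*A 1 0 - 2*(A 0 1*A 1 1) = 0
    · -- ss = 0
      have hTB2 : φ' (hatTf A d) =
          C (A 0 0*A 0 2 - A 0 1^2) * (P1 u)^2
          + C (A 0 2*d 0 + A 0 0*d 2 - 2*(A 0 1*d 1)) * P1 u
          + C (A 1 0*d 2 - 2*(A 1 1*d 1)) * P2 u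
          + C (A 2 0*d 2) * P3 u + C (d 0*d 2 - d 1^2) + C (A 0 2*A 2 0) * X 4 := by
        rw [hTB, hs, C_0, zero_mul, zero_add]
      by_cases hd2 : d 2 = 0
      · -- B3 : ss = 0, d2 = 0
        have hvC : C (A 1 0*d 2 - 2*(A 1 1*d 1)) = (C (-(2*(A 1 1*d 1))) : MvPolynomial (Fin 6) k) := by
          rw [hd2]; ring_nf
        have hTB3 : φ' (hatTf A d) =
            C (A 0 0*A 0 2 - A 0 1^2) * (P1 u)^2
            + C (A 0 2*d 0 + A 0 0*d 2 - 2*(A 0 1*d 1)) * P1 u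
            + C (-(2*(A 1 1*d 1))) * P2 u
            + C (-(d 1^2)) + C (A 0 2*A 2 0) * X 4 := by
          rw [hTB2, hvC, hd2]
          simp only [mul_zero, zero_sub, map_neg, C_0, zero_mul, add_zero]
          try ring
        by_cases hq : A 0 0*A 0 2 - A 0 1^2 = 0
        · -- qq = 0
          have hTB3b0 : φ' (hatTf A d) =
              C (A 0 2*d 0 + A 0 0*d 2 - 2*(A 0 1*d 1)) * P1 u
              + C (-(2*(A 1 1*d 1))) * P2 u
              + C (-(d 1^2)) + C (A 0 2*A 2 0) * X 4 := by
            rw [hTB3, hq, C_0, zero_mul, zero_add]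
          by_cases hd1 : d 1 = 0
          · -- B3c : d1 = 0 as well
            have hv0 : (C (-(2*(A 1 1*d 1))) : MvPolynomial (Fin 6) k) = 0 := by
              rw [hd1]; simp
            have hz0 : (C (-(d 1^2)) : MvPolynomial (Fin 6) k) = 0 := by
              rw [hd1]; simp
            have hTB3c : φ' (hatTf A d) =
                C (A 0 2*A 2 0) * X 4
                + C (A 0 2*d 0 + A 0 0*d 2 - 2*(A 0 1*d 1)) * P1 u := by
              rw [hTB3b0, hv0, hz0]; ring
            by_cases hd0 : d 0 = 0
            · -- B3c-ii : T = cc * X4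
              have hw0 : (C (A 0 2*d 0 + A 0 0*d 2 - 2*(A 0 1*d 1)) :
                  MvPolynomial (Fin 6) k) = 0 := by
                rw [hd0, hd1, hd2]; simp
              have hTcc : φ' (hatTf A d) = C (A 0 2*A 2 0) * X 4 := by
                rw [hTB3c, hw0, zero_mul, add_zero]
              have QfB : φ' (hatLift A d (X 4)) ∈ Pset 0 1 := by
                apply mem_Pset
                · apply Bd.wtd
                  rw [hQf, hTcc]
                  exact Bd_Cmul _ bdX4w1
                · apply Bd.wtd
                  rw [hQf, hTcc]
                  exact Bd_Cmul _ bdX4w2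
                · rw [hQf, hTcc, coeff_C_mul, cfX4, mul_one]
                  exact mul_ne_zero ha02 ha20
              exact ⟨6, 0, 9, 8, 1, 12, by norm_num, by norm_num, by norm_num,
                QrB, QfB, QgB, by norm_num, by norm_num, by norm_num, by norm_num,
                by norm_num, by norm_num, by norm_num, by norm_num⟩
            · -- B3c-i : d0 ≠ 0: T ∈ P_{1,2}
              have QfB : φ' (hatLift A d (X 4)) ∈ Pset 1 2 := by
                apply mem_Pset
                · apply Bd.wtd
                  rw [hQf, hTB3c]
                  exact Bd_add (Bd_Cmul _ (Bd_mono bdX4w1 (by norm_num)))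
                    (Bd_Cmul _ (bdP1w1 u))
                · apply Bd.wtd
                  rw [hQf, hTB3c]
                  exact Bd_add (Bd_Cmul _ (Bd_mono bdX4w2 (by norm_num)))
                    (Bd_Cmul _ (bdP1w2 u))
                · have h0 : coeff (tfMon 1 2) (C (A 0 2*A 2 0) * X 4) = 0 :=
                    Bd.coeff_eq_zero (W := 1) (Bd_Cmul _ bdX4o)
                      (by rw [Wdeg_omg_tfMon]; norm_num)
                  rw [hQf, hTB3c, coeff_add, h0, zero_add, coeff_C_mul, cfP1]
                  refine mul_ne_zero ?_ (pow_ne_zero _ hu)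
                  rw [hd1, hd2]
                  simpa using mul_ne_zero ha02 hd0
              exact ⟨6, 1, 9, 8, 2, 12, by norm_num, by norm_num, by norm_num,
                QrB, QfB, QgB, by norm_num, by norm_num, by norm_num, by norm_num,
                by norm_num, by norm_num, by norm_num, by norm_num⟩
          · -- B3b : d1 ≠ 0 : T ∈ P_{2,3}
            have hTB3b : φ' (hatTf A d) =
                (C (A 0 2*d 0 + A 0 0*d 2 - 2*(A 0 1*d 1)) * P1 u
                + C (-(d 1^2)) + C (A 0 2*A 2 0) * X 4)
                + C (-(2*(A 1 1*d 1))) * P2 u := by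
              rw [hTB3b0]; ring
            have QfB : φ' (hatLift A d (X 4)) ∈ Pset 2 3 := by
              apply mem_Pset
              · apply Bd.wtd
                rw [hQf, hTB3b]
                exact Bd_add (Bd_add (Bd_add (Bd_Cmul _ (Bd_mono (bdP1w1 u) (by norm_num)))
                  (Bd_C _ _)) (Bd_Cmul _ (Bd_mono bdX4w1 (by norm_num))))
                  (Bd_Cmul _ (bdP2w1 u))
              · apply Bd.wtd
                rw [hQf, hTB3b]
                exact Bd_add (Bd_add (Bd_add (Bd_Cmul _ (Bd_mono (bdP1w2 u) (by norm_num)))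
                  (Bd_C _ _)) (Bd_Cmul _ (Bd_mono bdX4w2 (by norm_num))))
                  (Bd_Cmul _ (bdP2w2 u))
              · rw [hQf, hTB3b, coeff_add, coeff_C_mul, cfP2]
                have h0 : coeff (tfMon 2 3)
                    (C (A 0 2*d 0 + A 0 0*d 2 - 2*(A 0 1*d 1)) * P1 u
                      + C (-(d 1^2)) + C (A 0 2*A 2 0) * X 4) = 0 := by
                  refine Bd.coeff_eq_zero (W := 4) ?_ (by rw [Wdeg_omg_tfMon]; norm_num)
                  exact Bd_add (Bd_add (Bd_Cmul _ bd1o) (Bd_C _ _))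
                    (Bd_Cmul _ (Bd_mono bdX4o (by norm_num)))
                rw [h0, zero_add]
                refine mul_ne_zero ?_ (neg_ne_zero.mpr (pow_ne_zero _ hu))
                refine neg_ne_zero.mpr ?_
                refine mul_ne_zero (by norm_num) (mul_ne_zero ha11 hd1)
            exact ⟨6, 2, 9, 8, 3, 12, by norm_num, by norm_num, by norm_num,
              QrB, QfB, QgB, by norm_num, by norm_num, by norm_num, by norm_num,
              by norm_num, by norm_num, by norm_num, by norm_num⟩
        · -- B3a : qq ≠ 0 : T ∈ P_{2,4}
          have hTB3a : φ' (hatTf A d) =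
              (C (A 0 2*d 0 + A 0 0*d 2 - 2*(A 0 1*d 1)) * P1 u
              + C (-(2*(A 1 1*d 1))) * P2 u
              + C (-(d 1^2)) + C (A 0 2*A 2 0) * X 4)
              + C (A 0 0*A 0 2 - A 0 1^2) * (P1 u)^2 := by
            rw [hTB3]; ring
          have QfB : φ' (hatLift A d (X 4)) ∈ Pset 2 4 := by
            apply mem_Pset
            · apply Bd.wtd
              rw [hQf, hTB3]
              exact Bd_add (Bd_add (Bd_add (Bd_add
                (Bd_Cmul _ (Bd_pow2 (bdP1w1 u) (by norm_num)))
                (Bd_Cmul _ (Bd_mono (bdP1w1 u) (by norm_num))))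
                (Bd_Cmul _ (bdP2w1 u))) (Bd_C _ _))
                (Bd_Cmul _ (Bd_mono bdX4w1 (by norm_num)))
            · apply Bd.wtd
              rw [hQf, hTB3]
              exact Bd_add (Bd_add (Bd_add (Bd_add
                (Bd_Cmul _ (Bd_pow2 (bdP1w2 u) (by norm_num)))
                (Bd_Cmul _ (Bd_mono (bdP1w2 u) (by norm_num))))
                (Bd_Cmul _ (Bd_mono (bdP2w2 u) (by norm_num)))) (Bd_C _ _))
                (Bd_Cmul _ (Bd_mono bdX4w2 (by norm_num)))
            · rw [hQf, hTB3a, coeff_add, coeff_C_mul]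
              have h0 : coeff (tfMon 2 4)
                  (C (A 0 2*d 0 + A 0 0*d 2 - 2*(A 0 1*d 1)) * P1 u
                    + C (-(2*(A 1 1*d 1))) * P2 u
                    + C (-(d 1^2)) + C (A 0 2*A 2 0) * X 4) = 0 := by
                refine Bd.coeff_eq_zero (W := 7) ?_ (by rw [Wdeg_omg_tfMon]; norm_num)
                exact Bd_add (Bd_add (Bd_add (Bd_Cmul _ (Bd_mono bd1o (by norm_num)))
                  (Bd_Cmul _ bd2o)) (Bd_C _ _))
                  (Bd_Cmul _ (Bd_mono bdX4o (by norm_num)))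
              have h2 := coeff_pow2_tops (γ := 2) (δ := 4) (topP1 u) (by norm_num)
                (by norm_num) (by norm_num)
              rw [h0, h2, cfP1, zero_add]
              exact mul_ne_zero hq (mul_ne_zero (pow_ne_zero _ hu) (pow_ne_zero _ hu))
          exact ⟨6, 2, 9, 8, 4, 12, by norm_num, by norm_num, by norm_num,
            QrB, QfB, QgB, by norm_num, by norm_num, by norm_num, by norm_num,
            by norm_num, by norm_num, by norm_num, by norm_num⟩
      · -- B2 : ss = 0, d2 ≠ 0 : T ∈ P_{3,4}
        have hTB2' : φ' (hatTf A d) =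
            (C (A 0 0*A 0 2 - A 0 1^2) * (P1 u)^2
            + C (A 0 2*d 0 + A 0 0*d 2 - 2*(A 0 1*d 1)) * P1 u
            + C (A 1 0*d 2 - 2*(A 1 1*d 1)) * P2 u
            + C (d 0*d 2 - d 1^2) + C (A 0 2*A 2 0) * X 4)
            + C (A 2 0*d 2) * P3 u := by
          rw [hTB2]; ring
        have QfB : φ' (hatLift A d (X 4)) ∈ Pset 3 4 := by
          apply mem_Pset
          · apply Bd.wtd
            rw [hQf, hTB2]
            exact Bd_add (Bd_add (Bd_add (Bd_add (Bd_add
              (Bd_Cmul _ (Bd_pow2 (bdP1w1 u) (by norm_num)))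
              (Bd_Cmul _ (Bd_mono (bdP1w1 u) (by norm_num))))
              (Bd_Cmul _ (Bd_mono (bdP2w1 u) (by norm_num))))
              (Bd_Cmul _ (bdP3w1 u))) (Bd_C _ _))
              (Bd_Cmul _ (Bd_mono bdX4w1 (by norm_num)))
          · apply Bd.wtd
            rw [hQf, hTB2]
            exact Bd_add (Bd_add (Bd_add (Bd_add (Bd_add
              (Bd_Cmul _ (Bd_pow2 (bdP1w2 u) (by norm_num)))
              (Bd_Cmul _ (Bd_mono (bdP1w2 u) (by norm_num))))
              (Bd_Cmul _ (Bd_mono (bdP2w2 u) (by norm_num))))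
              (Bd_Cmul _ (bdP3w2 u))) (Bd_C _ _))
              (Bd_Cmul _ (Bd_mono bdX4w2 (by norm_num)))
          · rw [hQf, hTB2', coeff_add, coeff_C_mul, cfP3]
            have h0 : coeff (tfMon 3 4)
                (C (A 0 0*A 0 2 - A 0 1^2) * (P1 u)^2
                  + C (A 0 2*d 0 + A 0 0*d 2 - 2*(A 0 1*d 1)) * P1 u
                  + C (A 1 0*d 2 - 2*(A 1 1*d 1)) * P2 u
                  + C (d 0*d 2 - d 1^2) + C (A 0 2*A 2 0) * X 4) = 0 := by
              refine Bd.coeff_eq_zero (W := 8) ?_ (by rw [Wdeg_omg_tfMon]; norm_num)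
              exact Bd_add (Bd_add (Bd_add (Bd_add
                (Bd_Cmul _ (Bd_pow2 bd1o (by norm_num)))
                (Bd_Cmul _ (Bd_mono bd1o (by norm_num))))
                (Bd_Cmul _ (Bd_mono bd2o (by norm_num)))) (Bd_C _ _))
                (Bd_Cmul _ (Bd_mono bdX4o (by norm_num)))
            rw [h0, zero_add]
            exact mul_ne_zero (mul_ne_zero ha20 hd2) (pow_ne_zero _ hu)
        exact ⟨6, 3, 9, 8, 4, 12, by norm_num, by norm_num, by norm_num,
          QrB, QfB, QgB, by norm_num, by norm_num, by norm_num, by norm_num,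
          by norm_num, by norm_num, by norm_num, by norm_num⟩
    · -- B1 : ss ≠ 0 : T ∈ P_{3,5}
      have hTB1 : φ' (hatTf A d) =
          (C (A 0 0*A 0 2 - A 0 1^2) * (P1 u)^2
          + C (A 0 2*d 0 + A 0 0*d 2 - 2*(A 0 1*d 1)) * P1 u
          + C (A 1 0*d 2 - 2*(A 1 1*d 1)) * P2 u
          + C (A 2 0*d 2) * P3 u + C (d 0*d 2 - d 1^2) + C (A 0 2*A 2 0) * X 4)
          + C (A 0 2*A 1 0 - 2*(A 0 1*A 1 1)) * (P1 u * P2 u) := by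
        rw [hTB]; ring
      have QfB : φ' (hatLift A d (X 4)) ∈ Pset 3 5 := by
        apply mem_Pset
        · exact Bd.wtd (by rw [hQf]; exact bdTw1)
        · exact Bd.wtd (by rw [hQf]; exact bdTw2)
        · rw [hQf, hTB1, coeff_add, coeff_C_mul]
          have h0 : coeff (tfMon 3 5)
              (C (A 0 0*A 0 2 - A 0 1^2) * (P1 u)^2
                + C (A 0 2*d 0 + A 0 0*d 2 - 2*(A 0 1*d 1)) * P1 u
                + C (A 1 0*d 2 - 2*(A 1 1*d 1)) * P2 u
                + C (A 2 0*d 2) * P3 u + C (d 0*d 2 - d 1^2) + C (A 0 2*A 2 0) * X 4) = 0 := by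
            refine Bd.coeff_eq_zero (W := 10) ?_ (by rw [Wdeg_omg_tfMon]; norm_num)
            exact Bd_add (Bd_add (Bd_add (Bd_add (Bd_add
              (Bd_Cmul _ (Bd_pow2 bd1o (by norm_num)))
              (Bd_Cmul _ (Bd_mono bd1o (by norm_num))))
              (Bd_Cmul _ (Bd_mono bd2o (by norm_num))))
              (Bd_Cmul _ bd3o)) (Bd_C _ _))
              (Bd_Cmul _ (Bd_mono bdX4o (by norm_num)))
          have h2 := coeff_mul_tops (γ := 3) (δ := 5) (topP1 u) (topP2 u) (by norm_num)
            (by norm_num) (by norm_num) (by norm_num)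
          rw [h0, h2, cfP1, cfP2, zero_add]
          exact mul_ne_zero hs (mul_ne_zero (pow_ne_zero _ hu)
            (neg_ne_zero.mpr (pow_ne_zero _ hu)))
      exact ⟨6, 3, 9, 8, 5, 12, by norm_num, by norm_num, by norm_num,
        QrB, QfB, QgB, by norm_num, by norm_num, by norm_num, by norm_num,
        by norm_num, by norm_num, by norm_num, by norm_num⟩
  · -- CASE A : e ≠ 0
    have hTA : φ' (hatTf A d) =
        (C (A 0 2*A 1 0 - 2*(A 0 1*A 1 1)) * (P1 u * P2 u)
        + C (A 0 0*A 0 2 - A 0 1^2) * (P1 u)^2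
        + C (A 0 2*d 0 + A 0 0*d 2 - 2*(A 0 1*d 1)) * P1 u
        + C (A 1 0*d 2 - 2*(A 1 1*d 1)) * P2 u
        + C (A 2 0*d 2) * P3 u + C (d 0*d 2 - d 1^2) + C (A 0 2*A 2 0) * X 4)
        + C (A 0 2*A 2 0 - A 1 1^2) * (P2 u)^2 := by
      rw [hTnf]; ring
    have bdrestA : Bd omg
        (C (A 0 2*A 1 0 - 2*(A 0 1*A 1 1)) * (P1 u * P2 u)
        + C (A 0 0*A 0 2 - A 0 1^2) * (P1 u)^2
        + C (A 0 2*d 0 + A 0 0*d 2 - 2*(A 0 1*d 1)) * P1 u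
        + C (A 1 0*d 2 - 2*(A 1 1*d 1)) * P2 u
        + C (A 2 0*d 2) * P3 u + C (d 0*d 2 - d 1^2) + C (A 0 2*A 2 0) * X 4) 11 := by
      exact Bd_add (Bd_add (Bd_add (Bd_add (Bd_add (Bd_add
        (Bd_Cmul _ (Bd_mul bd1o bd2o (by norm_num)))
        (Bd_Cmul _ (Bd_pow2 bd1o (by norm_num))))
        (Bd_Cmul _ (Bd_mono bd1o (by norm_num))))
        (Bd_Cmul _ (Bd_mono bd2o (by norm_num))))
        (Bd_Cmul _ (Bd_mono bd3o (by norm_num))))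
        (Bd_C _ _))
        (Bd_Cmul _ (Bd_mono bdX4o (by norm_num)))
    have topP2sq : TopBd omg ((P2 u)^2) 14 (tfMon 4 6) := TopBd_pow2_tf (topP2 u)
    have topTA : TopBd omg (φ' (hatTf A d)) 14 (tfMon 4 6) := by
      rw [hTA]
      exact TopBd_add_right bdrestA (TopBd_C_mul _ topP2sq) (by norm_num)
    have cfTA : coeff (tfMon 4 6) (φ' (hatTf A d)) =
        (A 0 2*A 2 0 - A 1 1^2) * (-(u^4) * -(u^4)) := by
      rw [hTA, coeff_add, coeff_C_mul]
      have h0 := Bd.coeff_eq_zero bdrestA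
        (M := tfMon 4 6) (by rw [Wdeg_omg_tfMon]; norm_num)
      have h2 := coeff_pow2_tops (γ := 4) (δ := 6) (topP2 u) (by norm_num) (by norm_num)
        (by norm_num)
      rw [h0, h2, cfP2, zero_add]
    have cfTAne : (A 0 2*A 2 0 - A 1 1^2) * (-(u^4) * -(u^4)) ≠ 0 :=
      mul_ne_zero he (mul_ne_zero (neg_ne_zero.mpr (pow_ne_zero _ hu))
        (neg_ne_zero.mpr (pow_ne_zero _ hu)))
    have bdTw1 : Bd w1 (φ' (hatTf A d)) 4 := by
      rw [hTnf]
      exact Bd_add (Bd_add (Bd_add (Bd_add (Bd_add (Bd_add (Bd_add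
        (Bd_Cmul _ (Bd_pow2 (bdP2w1 u) (by norm_num)))
        (Bd_Cmul _ (Bd_mul (bdP1w1 u) (bdP2w1 u) (by norm_num))))
        (Bd_Cmul _ (Bd_pow2 (bdP1w1 u) (by norm_num))))
        (Bd_Cmul _ (Bd_mono (bdP1w1 u) (by norm_num))))
        (Bd_Cmul _ (Bd_mono (bdP2w1 u) (by norm_num))))
        (Bd_Cmul _ (Bd_mono (bdP3w1 u) (by norm_num))))
        (Bd_C _ _))
        (Bd_Cmul _ (Bd_mono bdX4w1 (by norm_num)))
    have bdTw2 : Bd w2 (φ' (hatTf A d)) 6 := by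
      rw [hTnf]
      exact Bd_add (Bd_add (Bd_add (Bd_add (Bd_add (Bd_add (Bd_add
        (Bd_Cmul _ (Bd_pow2 (bdP2w2 u) (by norm_num)))
        (Bd_Cmul _ (Bd_mul (bdP1w2 u) (bdP2w2 u) (by norm_num))))
        (Bd_Cmul _ (Bd_pow2 (bdP1w2 u) (by norm_num))))
        (Bd_Cmul _ (Bd_mono (bdP1w2 u) (by norm_num))))
        (Bd_Cmul _ (Bd_mono (bdP2w2 u) (by norm_num))))
        (Bd_Cmul _ (Bd_mono (bdP3w2 u) (by norm_num))))
        (Bd_C _ _))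
        (Bd_Cmul _ (Bd_mono bdX4w2 (by norm_num)))
    have bdTo : Bd omg (φ' (hatTf A d)) 14 := topTA.bd
    have QrA : φ' (hatLift A d (X 3)) ∈ Pset 6 9 := by
      apply mem_Pset
      · apply Bd.wtd
        rw [hQr]
        exact Bd_add (Bd_mul bdY1w1 bdTw1 (by norm_num)) (Bd_pow2 bdY0w1 (by norm_num))
      · apply Bd.wtd
        rw [hQr]
        exact Bd_add (Bd_mul bdY1w2 bdTw2 (by norm_num)) (Bd_pow2 bdY0w2 (by norm_num))
      · rw [hQr, coeff_add]
        have h1 := coeff_mul_tops (γ := 6) (δ := 9) topY1 topTA (by norm_num) (by norm_num)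
          (by norm_num) (by norm_num)
        have h2 : coeff (tfMon 6 9) (φ' (affImg A d 0) ^ 2) = 0 :=
          Bd.coeff_eq_zero (W := 20) (Bd_pow2 topY0.bd (by norm_num))
            (by rw [Wdeg_omg_tfMon]; norm_num)
        rw [h1, h2, cfY1, cfTA, add_zero]
        exact mul_ne_zero (mul_ne_zero ha11 (neg_ne_zero.mpr (pow_ne_zero _ hu))) cfTAne
    have QfA : φ' (hatLift A d (X 4)) ∈ Pset 4 6 := by
      apply mem_Pset
      · exact Bd.wtd (by rw [hQf]; exact bdTw1)
      · exact Bd.wtd (by rw [hQf]; exact bdTw2)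
      · rw [hQf, cfTA]
        exact cfTAne
    have QgA : φ' (hatLift A d (X 5)) ∈ Pset 9 14 := by
      apply mem_Pset
      · apply Bd.wtd
        rw [hQg]
        refine Bd_add (Bd_add ?_ ?_) (Bd_pow3 bdY0w1 (by norm_num))
        · exact Bd_mul bdY2w1 (Bd_pow2 (W' := 8) bdTw1 (by norm_num)) (by norm_num)
        · exact Bd_mul (Bd_mul (W := 5) (Bd_numMul 2 bdY0w1) bdY1w1 (by norm_num)) bdTw1
            (by norm_num)
      · apply Bd.wtd
        rw [hQg]
        refine Bd_add (Bd_add ?_ ?_) (Bd_pow3 bdY0w2 (by norm_num))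
        · exact Bd_mul bdY2w2 (Bd_pow2 (W' := 12) bdTw2 (by norm_num)) (by norm_num)
        · exact Bd_mul (Bd_mul (W := 7) (Bd_numMul 2 bdY0w2) bdY1w2 (by norm_num)) bdTw2
            (by norm_num)
      · rw [hQg, coeff_add, coeff_add]
        have h2 : coeff (tfMon 9 14)
            (2 * φ' (affImg A d 0) * φ' (affImg A d 1) * φ' (hatTf A d)) = 0 :=
          Bd.coeff_eq_zero (W := 31)
            (Bd_mul (Bd_mul (W := 17) (Bd_numMul 2 topY0.bd) topY1.bd (by norm_num))
            bdTo (by norm_num)) (by rw [Wdeg_omg_tfMon]; norm_num)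
        have h3 : coeff (tfMon 9 14) (φ' (affImg A d 0) ^ 3) = 0 :=
          Bd.coeff_eq_zero (W := 30) (Bd_pow3 topY0.bd (by norm_num))
            (by rw [Wdeg_omg_tfMon]; norm_num)
        have h1 := coeff_mul_tops (γ := 9) (δ := 14) topY2 (TopBd_pow2_tf topTA)
          (by norm_num) (by norm_num) (by norm_num) (by norm_num)
        have h1' := coeff_pow2_tops (γ := 8) (δ := 12) topTA (by norm_num) (by norm_num)
          (by norm_num)
        rw [h1, h1', h2, h3, cfY2, cfTA, add_zero, add_zero]
        exact mul_ne_zero (mul_ne_zero ha02 (pow_ne_zero _ hu))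
          (mul_ne_zero cfTAne cfTAne)
    exact ⟨6, 4, 9, 9, 6, 14, by norm_num, by norm_num, by norm_num,
      QrA, QfA, QgA, by norm_num, by norm_num, by norm_num, by norm_num,
      by norm_num, by norm_num, by norm_num, by norm_num⟩

/-- (Lemma 5 of the paper.)  If the type of
`α ∈ Aff_3(k) \ B` is `(3,2,1)`, then the lift `α̂` satisfies condition (C). -/
theorem statement17 [CharZero k]
    (hln6 : ∀ p : MvPolynomial (Fin 6) k, ∃ l : ℕ, Del'^[l] p = 0)
    (u : k) (hu : u ≠ 0)
    (φ' : MvPolynomial (Fin 6) k ≃ₐ[k] MvPolynomial (Fin 6) k)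
    (hφ' : IsExpOf (fun p => u • Del' p) φ')
    (α : MvPolynomial (Fin 3) k ≃ₐ[k] MvPolynomial (Fin 3) k)
    (A : Matrix (Fin 3) (Fin 3) k) (d : Fin 3 → k)
    (hdet : IsUnit A.det)
    (hαA : ∀ i : Fin 3, α (X i) = (∑ j : Fin 3, C (A j i) * X j) + C (d i))
    (hαB : α ∉ BSet)
    (γ1 γ2 γ3 : ℕ)
    (ht1 : TypeIs A 0 γ1) (ht2 : TypeIs A 1 γ2) (ht3 : TypeIs A 2 γ3)
    (hcase : γ1 = 3 ∧ γ2 = 2 ∧ γ3 = 1) :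
    CondC γ1 γ2 γ3 φ' (hatLift A d) := by
  obtain ⟨hg1, hg2, hg3⟩ := hcase
  subst hg1; subst hg2; subst hg3
  obtain ⟨i1, hi1, hne1, hz1⟩ := ht1
  obtain ⟨i2, hi2, hne2, hz2⟩ := ht2
  obtain ⟨i3, hi3, hne3, hz3⟩ := ht3
  have e1 : i1 = (2 : Fin 3) := by
    apply Fin.ext
    show (i1 : ℕ) = 2
    omega
  have e2 : i2 = (1 : Fin 3) := by
    apply Fin.ext
    show (i2 : ℕ) = 1
    omega
  have e3 : i3 = (0 : Fin 3) := by
    apply Fin.ext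
    show (i3 : ℕ) = 0
    omega
  subst e1; subst e2; subst e3
  exact statement17' u hu φ' hφ' A d hne1 hne2 hne3
    (hz2 2 (by decide)) (hz3 1 (by decide)) (hz3 2 (by decide))

end YasudaPaper
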